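/- The number of connected polyominoes consisting of exactly 5 cells in the 2D square grid, counted up to translation and rotation by multiples of π/2 (but not reflection), is exactly 18. -/

import Mathlib

/-- Side-adjacency of cells in the 2D square grid. -/
def Adj (a b : ℤ × ℤ) : Prop := (a.1 - b.1).natAbs + (a.2 - b.2).natAbs = 1

/-- A polyomino (finite set of cells) is connected if its side-adjacency graph is connected. -/
def Conn (P : Finset (ℤ × ℤ)) : Prop :=
  ∀ a ∈ P, ∀ b ∈ P, Relation.ReflTransGen (fun x y => x ∈ P ∧ y ∈ P ∧ Adj x y) a b

/-- Rotation by π/2 about the origin. -/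
def rotQ (c : ℤ × ℤ) : ℤ × ℤ := (-c.2, c.1)

/-- Connected 5-cell polyominoes. -/
def Pento : Type := {P : Finset (ℤ × ℤ) // P.card = 5 ∧ Conn P}

/-- Equivalence up to translation and rotation by multiples of π/2 (no reflection). -/
def pentoRel (P Q : Pento) : Prop :=
  ∃ (k : ℕ) (t : ℤ × ℤ), Q.1 = P.1.image (fun c => rotQ^[k] c + t)

def mcorn (P : Finset (ℤ × ℤ)) : ℤ × ℤ :=
  (WithTop.untopD 0 ((P.image Prod.fst).min), WithTop.untopD 0 ((P.image Prod.snd).min))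

def nrm (P : Finset (ℤ × ℤ)) : Finset (ℤ × ℤ) := P.image (fun c => c - mcorn P)

def nbrs (Q : Finset (ℤ × ℤ)) : Finset (ℤ × ℤ) :=
  Q.biUnion (fun c => {(c.1+1,c.2),(c.1-1,c.2),(c.1,c.2+1),(c.1,c.2-1)})

-- basic Adj lemmas
lemma adj_symm {a b : ℤ × ℤ} (h : Adj a b) : Adj b a := by
  unfold Adj at *; omega

lemma adj_ne {a b : ℤ × ℤ} (h : Adj a b) : a ≠ b := by
  rintro rfl; unfold Adj at h; omega

lemma adj_add {a b t : ℤ × ℤ} : Adj (a + t) (b + t) ↔ Adj a b := by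
  unfold Adj
  constructor <;> (intro h; simp [Prod.fst_add, Prod.snd_add] at *; omega)

lemma mem_nbrs {Q : Finset (ℤ × ℤ)} {d : ℤ × ℤ} :
    d ∈ nbrs Q ↔ ∃ q ∈ Q, Adj q d := by
  unfold nbrs
  simp only [Finset.mem_biUnion, Finset.mem_insert, Finset.mem_singleton]
  constructor
  · rintro ⟨q, hq, h | h | h | h⟩ <;> exact ⟨q, hq, by subst h; unfold Adj; simp⟩
  · rintro ⟨q, hq, h⟩
    refine ⟨q, hq, ?_⟩
    unfold Adj at h
    obtain ⟨a, b⟩ := q; obtain ⟨c, d⟩ := d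
    simp at h ⊢
    omega

lemma image_nrm (P : Finset (ℤ × ℤ)) : (nrm P).image (· + mcorn P) = P := by
  unfold nrm
  rw [Finset.image_image]
  have : ((· + mcorn P) ∘ fun c => c - mcorn P) = id := by
    funext c; simp
  rw [this, Finset.image_id]

lemma min_image_add (s : Finset ℤ) (hs : s.Nonempty) (a : ℤ) :
    WithTop.untopD 0 ((s.image (· + a)).min) = WithTop.untopD 0 s.min + a := by
  have h1 : (s.image (· + a)).min = (s.min' hs + a : ℤ) := by
    apply le_antisymm
    · exact Finset.min_le (Finset.mem_image_of_mem _ (s.min'_mem hs))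
    · apply Finset.le_min
      rintro y hy
      obtain ⟨z, hz, rfl⟩ := Finset.mem_image.mp hy
      exact_mod_cast add_le_add_left (s.min'_le z hz) a
  have h2 : s.min = (s.min' hs : ℤ) := (s.coe_min' hs).symm
  rw [h1, h2]; rfl

lemma mcorn_image_add (P : Finset (ℤ × ℤ)) (hP : P.Nonempty) (t : ℤ × ℤ) :
    mcorn (P.image (· + t)) = mcorn P + t := by
  unfold mcorn
  have hf : (P.image (· + t)).image Prod.fst = (P.image Prod.fst).image (· + t.1) := by
    rw [Finset.image_image, Finset.image_image]; rfl
  have hs : (P.image (· + t)).image Prod.snd = (P.image Prod.snd).image (· + t.2) := by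
    rw [Finset.image_image, Finset.image_image]; rfl
  rw [hf, hs, min_image_add _ (hP.image _), min_image_add _ (hP.image _)]
  rfl

lemma norm_image_add (P : Finset (ℤ × ℤ)) (hP : P.Nonempty) (t : ℤ × ℤ) :
    nrm (P.image (· + t)) = nrm P := by
  unfold nrm
  rw [mcorn_image_add P hP t, Finset.image_image]
  congr 1
  funext c
  simp only [Function.comp_apply]
  ring

abbrev stp (P : Finset (ℤ × ℤ)) : ℤ × ℤ → ℤ × ℤ → Prop :=
  fun x y => x ∈ P ∧ y ∈ P ∧ Adj x y

lemma stp_symm (P : Finset (ℤ × ℤ)) : Symmetric (stp P) :=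
  fun _ _ h => ⟨h.2.1, h.1, adj_symm h.2.2⟩

lemma rtg_symm {P : Finset (ℤ × ℤ)} {a b : ℤ × ℤ}
    (h : Relation.ReflTransGen (stp P) a b) : Relation.ReflTransGen (stp P) b a :=
  by haveI : Std.Symm (stp P) := ⟨fun _ _ h => stp_symm P h⟩; exact Std.Symm.symm _ _ h

lemma conn_image_add {P : Finset (ℤ × ℤ)} (h : Conn P) (t : ℤ × ℤ) :
    Conn (P.image (· + t)) := by
  intro a ha b hb
  obtain ⟨a0, ha0, rfl⟩ := Finset.mem_image.mp ha
  obtain ⟨b0, hb0, rfl⟩ := Finset.mem_image.mp hb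
  refine Relation.ReflTransGen.lift (· + t) ?_ _ _ (h a0 ha0 b0 hb0)
  rintro x y ⟨hx, hy, hxy⟩
  exact ⟨Finset.mem_image_of_mem _ hx, Finset.mem_image_of_mem _ hy, adj_add.mpr hxy⟩

lemma conn_singleton (a : ℤ × ℤ) : Conn {a} := by
  intro x hx y hy
  simp only [Finset.mem_singleton] at hx hy
  subst hx; subst hy; exact Relation.ReflTransGen.refl

lemma conn_insert {P : Finset (ℤ × ℤ)} {d q : ℤ × ℤ} (hq : q ∈ P) (hadj : Adj q d)
    (h : Conn P) : Conn (insert d P) := by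
  have mono : ∀ {x y}, stp P x y → stp (insert d P) x y := by
    rintro x y ⟨hx, hy, hxy⟩
    exact ⟨Finset.mem_insert_of_mem hx, Finset.mem_insert_of_mem hy, hxy⟩
  have hd : d ∈ insert d P := Finset.mem_insert_self d P
  have hstep : stp (insert d P) q d :=
    ⟨Finset.mem_insert_of_mem hq, hd, hadj⟩
  have key : ∀ a ∈ P, Relation.ReflTransGen (stp (insert d P)) a d := by
    intro a ha
    exact Relation.ReflTransGen.tail (Relation.ReflTransGen.mono (fun _ _ => mono) _ _ (h a ha q hq)) hstep
  intro a ha b hb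
  rcases Finset.mem_insert.mp ha with rfl | ha'
  · rcases Finset.mem_insert.mp hb with rfl | hb'
    · exact Relation.ReflTransGen.refl
    · exact rtg_symm (key b hb')
  · rcases Finset.mem_insert.mp hb with rfl | hb'
    · exact key a ha'
    · exact Relation.ReflTransGen.mono (fun _ _ => mono) _ _ (h a ha' b hb')

-- reachability with fuel
def reachN (P : Finset (ℤ × ℤ)) (r : ℤ × ℤ) : ℕ → ℤ × ℤ → Prop
  | 0, x => x = r
  | (n+1), x => reachN P r n x ∨ ∃ y, reachN P r n y ∧ stp P y x

lemma rtg_iff_reachN {P : Finset (ℤ × ℤ)} {r x : ℤ × ℤ} :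
    Relation.ReflTransGen (stp P) r x ↔ ∃ n, reachN P r n x := by
  constructor
  · intro h
    induction h with
    | refl => exact ⟨0, rfl⟩
    | tail _ hs ih => obtain ⟨n, hn⟩ := ih; exact ⟨n+1, Or.inr ⟨_, hn, hs⟩⟩
  · rintro ⟨n, hn⟩
    induction n generalizing x with
    | zero => cases hn; exact Relation.ReflTransGen.refl
    | succ n ih =>
      rcases hn with h | ⟨y, hy, hs⟩
      · exact ih h
      · exact Relation.ReflTransGen.tail (ih hy) hs

lemma exists_leaf {P : Finset (ℤ × ℤ)} (h2 : 2 ≤ P.card) (hc : Conn P) :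
    ∃ c ∈ P, Conn (P.erase c) := by
  have hne : P.Nonempty := Finset.card_pos.mp (by omega)
  obtain ⟨r, hr⟩ := hne
  have hreach : ∀ x ∈ P, ∃ n, reachN P r n x := fun x hx =>
    rtg_iff_reachN.mp (hc r hr x hx)
  classical
  set d : ℤ × ℤ → ℕ := fun x => if h : ∃ n, reachN P r n x then Nat.find h else 0 with hd
  obtain ⟨c, hcP, hmax⟩ := Finset.exists_max_image P d ⟨r, hr⟩
  have dspec : ∀ x ∈ P, reachN P r (d x) x := by
    intro x hx
    have h := hreach x hx
    simp only [hd, dif_pos h]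
    exact Nat.find_spec h
  have dmin : ∀ x ∈ P, ∀ m, reachN P r m x → d x ≤ m := by
    intro x hx m hm
    have h := hreach x hx
    simp only [hd, dif_pos h]
    exact Nat.find_le hm
  have dr : d r = 0 := Nat.le_zero.mp (dmin r hr 0 rfl)
  -- c ≠ r and d c positive
  have hdc : 1 ≤ d c := by
    by_contra h
    push_neg at h
    interval_cases hdc : d c
    -- all elements reach in 0 steps → all equal r → card ≤ 1
    · have : ∀ x ∈ P, x = r := by
        intro x hx
        have := dspec x hx
        have h0 : d x = 0 := by have := hmax x hx; omega
        rw [h0] at this; exact this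
      have : P ⊆ {r} := fun x hx => Finset.mem_singleton.mpr (this x hx)
      have := Finset.card_le_card this
      simp at this; omega
  have hrc : r ≠ c := fun h => by rw [← h, dr] at hdc; omega
  refine ⟨c, hcP, ?_⟩
  -- key: every x ∈ P, x ≠ c reachable from r inside erase
  have key : ∀ n, ∀ x ∈ P, x ≠ c → d x ≤ n →
      Relation.ReflTransGen (stp (P.erase c)) r x := by
    intro n
    induction n with
    | zero =>
      intro x hx hxc h0
      have := dspec x hx
      rw [Nat.le_zero.mp h0] at this
      cases this; exact Relation.ReflTransGen.refl
    | succ n ih =>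
      intro x hx hxc hle
      rcases Nat.lt_or_ge (d x) (n+1) with h | h
      · exact ih x hx hxc (Nat.lt_succ_iff.mp h)
      · have hdx : d x = n + 1 := le_antisymm hle h
        have hsp := dspec x hx
        rw [hdx] at hsp
        rcases hsp with hbad | ⟨y, hy, hs⟩
        · exact absurd (dmin x hx n hbad) (by omega)
        · have hyP : y ∈ P := hs.1
          have hdy : d y ≤ n := dmin y hyP n hy
          have hyc : y ≠ c := by
            intro hyc
            have : d c ≤ n := hyc ▸ hdy
            have : d x ≤ d c := hmax x hx
            omega
          have hycle := ih y hyP hyc hdy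
          exact Relation.ReflTransGen.tail hycle
            ⟨Finset.mem_erase.mpr ⟨hyc, hyP⟩, Finset.mem_erase.mpr ⟨hxc, hx⟩, hs.2.2⟩
  intro a ha b hb
  obtain ⟨hac, haP⟩ := Finset.mem_erase.mp ha
  obtain ⟨hbc, hbP⟩ := Finset.mem_erase.mp hb
  exact (rtg_symm (key (d a) a haP hac le_rfl)).trans (key (d b) b hbP hbc le_rfl)

lemma image_nrm' (P : Finset (ℤ × ℤ)) : P = (nrm P).image (· + mcorn P) :=
  (image_nrm P).symm

lemma stepL {n : ℕ} (hn : 1 ≤ n) (Ln Ln1 : List (Finset (ℤ × ℤ)))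
    (hD : ∀ Q ∈ Ln, ∀ d ∈ nbrs Q \ Q, nrm (insert d Q) ∈ Ln1)
    (hC : ∀ P : Finset (ℤ × ℤ), P.card = n → Conn P → ∃ Q ∈ Ln, ∃ t, P = Q.image (· + t)) :
    ∀ P : Finset (ℤ × ℤ), P.card = n + 1 → Conn P → ∃ Q ∈ Ln1, ∃ t, P = Q.image (· + t) := by
  intro P hcard hconn
  obtain ⟨c, hcP, hconn'⟩ := exists_leaf (by omega) hconn
  set P' := P.erase c with hP'
  have hcard' : P'.card = n := by rw [hP', Finset.card_erase_of_mem hcP, hcard]; omega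
  obtain ⟨Q, hQ, t, hQt⟩ := hC P' hcard' hconn'
  -- c is adjacent to some element of P'
  have hne' : P'.Nonempty := Finset.card_pos.mp (by omega)
  obtain ⟨b0, hb0⟩ := hne'
  have hb0P : b0 ∈ P := Finset.mem_of_mem_erase hb0
  have hcb0 : c ≠ b0 := fun h => (Finset.mem_erase.mp hb0).1 h.symm
  obtain ⟨y, hy, -⟩ := Relation.ReflTransGen.cases_head_iff.mp (hconn c hcP b0 hb0P)
    |>.resolve_left hcb0
  have hyP : y ∈ P := hy.2.1
  have hadj : Adj c y := hy.2.2
  have hyc : y ≠ c := Ne.symm (adj_ne hadj)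
  have hyP' : y ∈ P' := Finset.mem_erase.mpr ⟨hyc, hyP⟩
  -- transfer to Q
  obtain ⟨q, hqQ, hqy⟩ := Finset.mem_image.mp (hQt ▸ hyP')
  set d0 : ℤ × ℤ := c - t with hd0
  have hadj' : Adj q d0 := by
    have : Adj y c := adj_symm hadj
    rw [← hqy] at this
    have := adj_add (t := -t) |>.mpr this
    simpa [hd0, sub_eq_add_neg] using this
  have hd0Q : d0 ∉ Q := by
    intro hmem
    have : c ∈ P' := by
      rw [hQt]
      refine Finset.mem_image.mpr ⟨d0, hmem, ?_⟩
      simp [hd0]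
    exact (Finset.mem_erase.mp this).1 rfl
  have hd0n : d0 ∈ nbrs Q \ Q := Finset.mem_sdiff.mpr ⟨mem_nbrs.mpr ⟨q, hqQ, hadj'⟩, hd0Q⟩
  have hmem1 := hD Q hQ d0 hd0n
  refine ⟨nrm (insert d0 Q), hmem1, mcorn (insert d0 Q) + t, ?_⟩
  have hPins : P = (insert d0 Q).image (· + t) := by
    rw [Finset.image_insert]
    have : d0 + t = c := by simp [hd0]
    rw [this, ← hQt, hP', Finset.insert_erase hcP]
  have hfun : ((fun x : ℤ × ℤ => x + t) ∘ (· + mcorn (insert d0 Q)))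
      = (· + (mcorn (insert d0 Q) + t)) := funext fun z => add_assoc z _ t
  have h2 : P = ((nrm (insert d0 Q)).image (· + mcorn (insert d0 Q))).image (fun x => x + t) := by
    rw [image_nrm]; exact hPins
  rw [Finset.image_image, hfun] at h2
  exact h2

lemma claim1 : ∀ P : Finset (ℤ × ℤ), P.card = 1 → Conn P →
    ∃ Q ∈ [({(0,0)} : Finset (ℤ × ℤ))], ∃ t, P = Q.image (· + t) := by
  intro P hcard _
  obtain ⟨a, rfl⟩ := Finset.card_eq_one.mp hcard
  exact ⟨{(0,0)}, List.mem_singleton.mpr rfl, a, by simp⟩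

lemma connL {n : ℕ} (Ln Ln1 : List (Finset (ℤ × ℤ)))
    (hD2 : ∀ Q' ∈ Ln1, ∃ Q ∈ Ln, ∃ d ∈ nbrs Q \ Q, Q' = nrm (insert d Q))
    (hC : ∀ Q ∈ Ln, Conn Q ∧ Q.card = n) :
    ∀ Q' ∈ Ln1, Conn Q' ∧ Q'.card = n + 1 := by
  intro Q' hQ'
  obtain ⟨Q, hQ, d, hd, rfl⟩ := hD2 Q' hQ'
  obtain ⟨hnb, hdQ⟩ := Finset.mem_sdiff.mp hd
  obtain ⟨q, hqQ, hadj⟩ := mem_nbrs.mp hnb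
  obtain ⟨hconn, hcard⟩ := hC Q hQ
  have hconn' : Conn (insert d Q) := conn_insert hqQ hadj hconn
  have hcard' : (insert d Q).card = n + 1 := by rw [Finset.card_insert_of_notMem hdQ, hcard]
  have heq : nrm (insert d Q) = (insert d Q).image (· + (-(mcorn (insert d Q)))) := by
    unfold nrm
    have h : (fun c : ℤ × ℤ => c - mcorn (insert d Q)) = (· + (-(mcorn (insert d Q)))) :=
      funext fun c => sub_eq_add_neg c _
    rw [h]
  constructor
  · rw [heq]; exact conn_image_add hconn' _
  · rw [heq, Finset.card_image_of_injective _ (add_left_injective _), hcard']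
def L1 : List (Finset (ℤ × ℤ)) := [
  ([((0 : ℤ), (0 : ℤ))] : List (ℤ × ℤ)).toFinset]

def L2 : List (Finset (ℤ × ℤ)) := [
  ([((0 : ℤ), (0 : ℤ)), ((0 : ℤ), (1 : ℤ))] : List (ℤ × ℤ)).toFinset,
  ([((0 : ℤ), (0 : ℤ)), ((1 : ℤ), (0 : ℤ))] : List (ℤ × ℤ)).toFinset]

def L3 : List (Finset (ℤ × ℤ)) := [
  ([((0 : ℤ), (0 : ℤ)), ((0 : ℤ), (1 : ℤ)), ((0 : ℤ), (2 : ℤ))] : List (ℤ × ℤ)).toFinset,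
  ([((0 : ℤ), (0 : ℤ)), ((0 : ℤ), (1 : ℤ)), ((1 : ℤ), (0 : ℤ))] : List (ℤ × ℤ)).toFinset,
  ([((0 : ℤ), (0 : ℤ)), ((0 : ℤ), (1 : ℤ)), ((1 : ℤ), (1 : ℤ))] : List (ℤ × ℤ)).toFinset,
  ([((0 : ℤ), (0 : ℤ)), ((1 : ℤ), (0 : ℤ)), ((1 : ℤ), (1 : ℤ))] : List (ℤ × ℤ)).toFinset,
  ([((0 : ℤ), (0 : ℤ)), ((1 : ℤ), (0 : ℤ)), ((2 : ℤ), (0 : ℤ))] : List (ℤ × ℤ)).toFinset,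
  ([((0 : ℤ), (1 : ℤ)), ((1 : ℤ), (0 : ℤ)), ((1 : ℤ), (1 : ℤ))] : List (ℤ × ℤ)).toFinset]

def L4 : List (Finset (ℤ × ℤ)) := [
  ([((0 : ℤ), (0 : ℤ)), ((0 : ℤ), (1 : ℤ)), ((0 : ℤ), (2 : ℤ)), ((0 : ℤ), (3 : ℤ))] : List (ℤ × ℤ)).toFinset,
  ([((0 : ℤ), (0 : ℤ)), ((0 : ℤ), (1 : ℤ)), ((0 : ℤ), (2 : ℤ)), ((1 : ℤ), (0 : ℤ))] : List (ℤ × ℤ)).toFinset,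
  ([((0 : ℤ), (0 : ℤ)), ((0 : ℤ), (1 : ℤ)), ((0 : ℤ), (2 : ℤ)), ((1 : ℤ), (1 : ℤ))] : List (ℤ × ℤ)).toFinset,
  ([((0 : ℤ), (0 : ℤ)), ((0 : ℤ), (1 : ℤ)), ((0 : ℤ), (2 : ℤ)), ((1 : ℤ), (2 : ℤ))] : List (ℤ × ℤ)).toFinset,
  ([((0 : ℤ), (0 : ℤ)), ((0 : ℤ), (1 : ℤ)), ((1 : ℤ), (0 : ℤ)), ((1 : ℤ), (1 : ℤ))] : List (ℤ × ℤ)).toFinset,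
  ([((0 : ℤ), (0 : ℤ)), ((0 : ℤ), (1 : ℤ)), ((1 : ℤ), (0 : ℤ)), ((2 : ℤ), (0 : ℤ))] : List (ℤ × ℤ)).toFinset,
  ([((0 : ℤ), (0 : ℤ)), ((0 : ℤ), (1 : ℤ)), ((1 : ℤ), (1 : ℤ)), ((1 : ℤ), (2 : ℤ))] : List (ℤ × ℤ)).toFinset,
  ([((0 : ℤ), (0 : ℤ)), ((0 : ℤ), (1 : ℤ)), ((1 : ℤ), (1 : ℤ)), ((2 : ℤ), (1 : ℤ))] : List (ℤ × ℤ)).toFinset,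
  ([((0 : ℤ), (0 : ℤ)), ((1 : ℤ), (0 : ℤ)), ((1 : ℤ), (1 : ℤ)), ((1 : ℤ), (2 : ℤ))] : List (ℤ × ℤ)).toFinset,
  ([((0 : ℤ), (0 : ℤ)), ((1 : ℤ), (0 : ℤ)), ((1 : ℤ), (1 : ℤ)), ((2 : ℤ), (0 : ℤ))] : List (ℤ × ℤ)).toFinset,
  ([((0 : ℤ), (0 : ℤ)), ((1 : ℤ), (0 : ℤ)), ((1 : ℤ), (1 : ℤ)), ((2 : ℤ), (1 : ℤ))] : List (ℤ × ℤ)).toFinset,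
  ([((0 : ℤ), (0 : ℤ)), ((1 : ℤ), (0 : ℤ)), ((2 : ℤ), (0 : ℤ)), ((2 : ℤ), (1 : ℤ))] : List (ℤ × ℤ)).toFinset,
  ([((0 : ℤ), (0 : ℤ)), ((1 : ℤ), (0 : ℤ)), ((2 : ℤ), (0 : ℤ)), ((3 : ℤ), (0 : ℤ))] : List (ℤ × ℤ)).toFinset,
  ([((0 : ℤ), (1 : ℤ)), ((0 : ℤ), (2 : ℤ)), ((1 : ℤ), (0 : ℤ)), ((1 : ℤ), (1 : ℤ))] : List (ℤ × ℤ)).toFinset,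
  ([((0 : ℤ), (1 : ℤ)), ((1 : ℤ), (0 : ℤ)), ((1 : ℤ), (1 : ℤ)), ((1 : ℤ), (2 : ℤ))] : List (ℤ × ℤ)).toFinset,
  ([((0 : ℤ), (1 : ℤ)), ((1 : ℤ), (0 : ℤ)), ((1 : ℤ), (1 : ℤ)), ((2 : ℤ), (0 : ℤ))] : List (ℤ × ℤ)).toFinset,
  ([((0 : ℤ), (1 : ℤ)), ((1 : ℤ), (0 : ℤ)), ((1 : ℤ), (1 : ℤ)), ((2 : ℤ), (1 : ℤ))] : List (ℤ × ℤ)).toFinset,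
  ([((0 : ℤ), (1 : ℤ)), ((1 : ℤ), (1 : ℤ)), ((2 : ℤ), (0 : ℤ)), ((2 : ℤ), (1 : ℤ))] : List (ℤ × ℤ)).toFinset,
  ([((0 : ℤ), (2 : ℤ)), ((1 : ℤ), (0 : ℤ)), ((1 : ℤ), (1 : ℤ)), ((1 : ℤ), (2 : ℤ))] : List (ℤ × ℤ)).toFinset]

def L5c : List (List (Finset (ℤ × ℤ))) := [
  [([((0 : ℤ), (0 : ℤ)), ((0 : ℤ), (1 : ℤ)), ((0 : ℤ), (2 : ℤ)), ((0 : ℤ), (3 : ℤ)), ((0 : ℤ), (4 : ℤ))] : List (ℤ × ℤ)).toFinset,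
   ([((0 : ℤ), (0 : ℤ)), ((1 : ℤ), (0 : ℤ)), ((2 : ℤ), (0 : ℤ)), ((3 : ℤ), (0 : ℤ)), ((4 : ℤ), (0 : ℤ))] : List (ℤ × ℤ)).toFinset],
  [([((0 : ℤ), (0 : ℤ)), ((0 : ℤ), (1 : ℤ)), ((0 : ℤ), (2 : ℤ)), ((0 : ℤ), (3 : ℤ)), ((1 : ℤ), (0 : ℤ))] : List (ℤ × ℤ)).toFinset,
   ([((0 : ℤ), (0 : ℤ)), ((1 : ℤ), (0 : ℤ)), ((2 : ℤ), (0 : ℤ)), ((3 : ℤ), (0 : ℤ)), ((3 : ℤ), (1 : ℤ))] : List (ℤ × ℤ)).toFinset,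
   ([((0 : ℤ), (3 : ℤ)), ((1 : ℤ), (0 : ℤ)), ((1 : ℤ), (1 : ℤ)), ((1 : ℤ), (2 : ℤ)), ((1 : ℤ), (3 : ℤ))] : List (ℤ × ℤ)).toFinset,
   ([((0 : ℤ), (0 : ℤ)), ((0 : ℤ), (1 : ℤ)), ((1 : ℤ), (1 : ℤ)), ((2 : ℤ), (1 : ℤ)), ((3 : ℤ), (1 : ℤ))] : List (ℤ × ℤ)).toFinset],
  [([((0 : ℤ), (0 : ℤ)), ((0 : ℤ), (1 : ℤ)), ((0 : ℤ), (2 : ℤ)), ((0 : ℤ), (3 : ℤ)), ((1 : ℤ), (1 : ℤ))] : List (ℤ × ℤ)).toFinset,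
   ([((0 : ℤ), (0 : ℤ)), ((1 : ℤ), (0 : ℤ)), ((2 : ℤ), (0 : ℤ)), ((2 : ℤ), (1 : ℤ)), ((3 : ℤ), (0 : ℤ))] : List (ℤ × ℤ)).toFinset,
   ([((0 : ℤ), (2 : ℤ)), ((1 : ℤ), (0 : ℤ)), ((1 : ℤ), (1 : ℤ)), ((1 : ℤ), (2 : ℤ)), ((1 : ℤ), (3 : ℤ))] : List (ℤ × ℤ)).toFinset,
   ([((0 : ℤ), (1 : ℤ)), ((1 : ℤ), (0 : ℤ)), ((1 : ℤ), (1 : ℤ)), ((2 : ℤ), (1 : ℤ)), ((3 : ℤ), (1 : ℤ))] : List (ℤ × ℤ)).toFinset],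
  [([((0 : ℤ), (0 : ℤ)), ((0 : ℤ), (1 : ℤ)), ((0 : ℤ), (2 : ℤ)), ((0 : ℤ), (3 : ℤ)), ((1 : ℤ), (2 : ℤ))] : List (ℤ × ℤ)).toFinset,
   ([((0 : ℤ), (0 : ℤ)), ((1 : ℤ), (0 : ℤ)), ((1 : ℤ), (1 : ℤ)), ((2 : ℤ), (0 : ℤ)), ((3 : ℤ), (0 : ℤ))] : List (ℤ × ℤ)).toFinset,
   ([((0 : ℤ), (1 : ℤ)), ((1 : ℤ), (0 : ℤ)), ((1 : ℤ), (1 : ℤ)), ((1 : ℤ), (2 : ℤ)), ((1 : ℤ), (3 : ℤ))] : List (ℤ × ℤ)).toFinset,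
   ([((0 : ℤ), (1 : ℤ)), ((1 : ℤ), (1 : ℤ)), ((2 : ℤ), (0 : ℤ)), ((2 : ℤ), (1 : ℤ)), ((3 : ℤ), (1 : ℤ))] : List (ℤ × ℤ)).toFinset],
  [([((0 : ℤ), (0 : ℤ)), ((0 : ℤ), (1 : ℤ)), ((0 : ℤ), (2 : ℤ)), ((0 : ℤ), (3 : ℤ)), ((1 : ℤ), (3 : ℤ))] : List (ℤ × ℤ)).toFinset,
   ([((0 : ℤ), (0 : ℤ)), ((0 : ℤ), (1 : ℤ)), ((1 : ℤ), (0 : ℤ)), ((2 : ℤ), (0 : ℤ)), ((3 : ℤ), (0 : ℤ))] : List (ℤ × ℤ)).toFinset,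
   ([((0 : ℤ), (0 : ℤ)), ((1 : ℤ), (0 : ℤ)), ((1 : ℤ), (1 : ℤ)), ((1 : ℤ), (2 : ℤ)), ((1 : ℤ), (3 : ℤ))] : List (ℤ × ℤ)).toFinset,
   ([((0 : ℤ), (1 : ℤ)), ((1 : ℤ), (1 : ℤ)), ((2 : ℤ), (1 : ℤ)), ((3 : ℤ), (0 : ℤ)), ((3 : ℤ), (1 : ℤ))] : List (ℤ × ℤ)).toFinset],
  [([((0 : ℤ), (0 : ℤ)), ((0 : ℤ), (1 : ℤ)), ((0 : ℤ), (2 : ℤ)), ((1 : ℤ), (0 : ℤ)), ((1 : ℤ), (1 : ℤ))] : List (ℤ × ℤ)).toFinset,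
   ([((0 : ℤ), (0 : ℤ)), ((1 : ℤ), (0 : ℤ)), ((1 : ℤ), (1 : ℤ)), ((2 : ℤ), (0 : ℤ)), ((2 : ℤ), (1 : ℤ))] : List (ℤ × ℤ)).toFinset,
   ([((0 : ℤ), (1 : ℤ)), ((0 : ℤ), (2 : ℤ)), ((1 : ℤ), (0 : ℤ)), ((1 : ℤ), (1 : ℤ)), ((1 : ℤ), (2 : ℤ))] : List (ℤ × ℤ)).toFinset,
   ([((0 : ℤ), (0 : ℤ)), ((0 : ℤ), (1 : ℤ)), ((1 : ℤ), (0 : ℤ)), ((1 : ℤ), (1 : ℤ)), ((2 : ℤ), (1 : ℤ))] : List (ℤ × ℤ)).toFinset],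
  [([((0 : ℤ), (0 : ℤ)), ((0 : ℤ), (1 : ℤ)), ((0 : ℤ), (2 : ℤ)), ((1 : ℤ), (0 : ℤ)), ((1 : ℤ), (2 : ℤ))] : List (ℤ × ℤ)).toFinset,
   ([((0 : ℤ), (0 : ℤ)), ((0 : ℤ), (1 : ℤ)), ((1 : ℤ), (0 : ℤ)), ((2 : ℤ), (0 : ℤ)), ((2 : ℤ), (1 : ℤ))] : List (ℤ × ℤ)).toFinset,
   ([((0 : ℤ), (0 : ℤ)), ((0 : ℤ), (2 : ℤ)), ((1 : ℤ), (0 : ℤ)), ((1 : ℤ), (1 : ℤ)), ((1 : ℤ), (2 : ℤ))] : List (ℤ × ℤ)).toFinset,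
   ([((0 : ℤ), (0 : ℤ)), ((0 : ℤ), (1 : ℤ)), ((1 : ℤ), (1 : ℤ)), ((2 : ℤ), (0 : ℤ)), ((2 : ℤ), (1 : ℤ))] : List (ℤ × ℤ)).toFinset],
  [([((0 : ℤ), (0 : ℤ)), ((0 : ℤ), (1 : ℤ)), ((0 : ℤ), (2 : ℤ)), ((1 : ℤ), (0 : ℤ)), ((2 : ℤ), (0 : ℤ))] : List (ℤ × ℤ)).toFinset,
   ([((0 : ℤ), (0 : ℤ)), ((1 : ℤ), (0 : ℤ)), ((2 : ℤ), (0 : ℤ)), ((2 : ℤ), (1 : ℤ)), ((2 : ℤ), (2 : ℤ))] : List (ℤ × ℤ)).toFinset,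
   ([((0 : ℤ), (2 : ℤ)), ((1 : ℤ), (2 : ℤ)), ((2 : ℤ), (0 : ℤ)), ((2 : ℤ), (1 : ℤ)), ((2 : ℤ), (2 : ℤ))] : List (ℤ × ℤ)).toFinset,
   ([((0 : ℤ), (0 : ℤ)), ((0 : ℤ), (1 : ℤ)), ((0 : ℤ), (2 : ℤ)), ((1 : ℤ), (2 : ℤ)), ((2 : ℤ), (2 : ℤ))] : List (ℤ × ℤ)).toFinset],
  [([((0 : ℤ), (0 : ℤ)), ((0 : ℤ), (1 : ℤ)), ((0 : ℤ), (2 : ℤ)), ((1 : ℤ), (1 : ℤ)), ((1 : ℤ), (2 : ℤ))] : List (ℤ × ℤ)).toFinset,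
   ([((0 : ℤ), (0 : ℤ)), ((0 : ℤ), (1 : ℤ)), ((1 : ℤ), (0 : ℤ)), ((1 : ℤ), (1 : ℤ)), ((2 : ℤ), (0 : ℤ))] : List (ℤ × ℤ)).toFinset,
   ([((0 : ℤ), (0 : ℤ)), ((0 : ℤ), (1 : ℤ)), ((1 : ℤ), (0 : ℤ)), ((1 : ℤ), (1 : ℤ)), ((1 : ℤ), (2 : ℤ))] : List (ℤ × ℤ)).toFinset,
   ([((0 : ℤ), (1 : ℤ)), ((1 : ℤ), (0 : ℤ)), ((1 : ℤ), (1 : ℤ)), ((2 : ℤ), (0 : ℤ)), ((2 : ℤ), (1 : ℤ))] : List (ℤ × ℤ)).toFinset],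
  [([((0 : ℤ), (0 : ℤ)), ((0 : ℤ), (1 : ℤ)), ((0 : ℤ), (2 : ℤ)), ((1 : ℤ), (1 : ℤ)), ((2 : ℤ), (1 : ℤ))] : List (ℤ × ℤ)).toFinset,
   ([((0 : ℤ), (0 : ℤ)), ((1 : ℤ), (0 : ℤ)), ((1 : ℤ), (1 : ℤ)), ((1 : ℤ), (2 : ℤ)), ((2 : ℤ), (0 : ℤ))] : List (ℤ × ℤ)).toFinset,
   ([((0 : ℤ), (1 : ℤ)), ((1 : ℤ), (1 : ℤ)), ((2 : ℤ), (0 : ℤ)), ((2 : ℤ), (1 : ℤ)), ((2 : ℤ), (2 : ℤ))] : List (ℤ × ℤ)).toFinset,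
   ([((0 : ℤ), (2 : ℤ)), ((1 : ℤ), (0 : ℤ)), ((1 : ℤ), (1 : ℤ)), ((1 : ℤ), (2 : ℤ)), ((2 : ℤ), (2 : ℤ))] : List (ℤ × ℤ)).toFinset],
  [([((0 : ℤ), (0 : ℤ)), ((0 : ℤ), (1 : ℤ)), ((0 : ℤ), (2 : ℤ)), ((1 : ℤ), (2 : ℤ)), ((1 : ℤ), (3 : ℤ))] : List (ℤ × ℤ)).toFinset,
   ([((0 : ℤ), (1 : ℤ)), ((1 : ℤ), (0 : ℤ)), ((1 : ℤ), (1 : ℤ)), ((2 : ℤ), (0 : ℤ)), ((3 : ℤ), (0 : ℤ))] : List (ℤ × ℤ)).toFinset,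
   ([((0 : ℤ), (0 : ℤ)), ((0 : ℤ), (1 : ℤ)), ((1 : ℤ), (1 : ℤ)), ((1 : ℤ), (2 : ℤ)), ((1 : ℤ), (3 : ℤ))] : List (ℤ × ℤ)).toFinset,
   ([((0 : ℤ), (1 : ℤ)), ((1 : ℤ), (1 : ℤ)), ((2 : ℤ), (0 : ℤ)), ((2 : ℤ), (1 : ℤ)), ((3 : ℤ), (0 : ℤ))] : List (ℤ × ℤ)).toFinset],
  [([((0 : ℤ), (0 : ℤ)), ((0 : ℤ), (1 : ℤ)), ((1 : ℤ), (1 : ℤ)), ((1 : ℤ), (2 : ℤ)), ((2 : ℤ), (1 : ℤ))] : List (ℤ × ℤ)).toFinset,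
   ([((0 : ℤ), (1 : ℤ)), ((1 : ℤ), (0 : ℤ)), ((1 : ℤ), (1 : ℤ)), ((1 : ℤ), (2 : ℤ)), ((2 : ℤ), (0 : ℤ))] : List (ℤ × ℤ)).toFinset,
   ([((0 : ℤ), (1 : ℤ)), ((1 : ℤ), (0 : ℤ)), ((1 : ℤ), (1 : ℤ)), ((2 : ℤ), (1 : ℤ)), ((2 : ℤ), (2 : ℤ))] : List (ℤ × ℤ)).toFinset,
   ([((0 : ℤ), (2 : ℤ)), ((1 : ℤ), (0 : ℤ)), ((1 : ℤ), (1 : ℤ)), ((1 : ℤ), (2 : ℤ)), ((2 : ℤ), (1 : ℤ))] : List (ℤ × ℤ)).toFinset],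
  [([((0 : ℤ), (0 : ℤ)), ((0 : ℤ), (1 : ℤ)), ((1 : ℤ), (1 : ℤ)), ((1 : ℤ), (2 : ℤ)), ((2 : ℤ), (2 : ℤ))] : List (ℤ × ℤ)).toFinset,
   ([((0 : ℤ), (1 : ℤ)), ((0 : ℤ), (2 : ℤ)), ((1 : ℤ), (0 : ℤ)), ((1 : ℤ), (1 : ℤ)), ((2 : ℤ), (0 : ℤ))] : List (ℤ × ℤ)).toFinset,
   ([((0 : ℤ), (0 : ℤ)), ((1 : ℤ), (0 : ℤ)), ((1 : ℤ), (1 : ℤ)), ((2 : ℤ), (1 : ℤ)), ((2 : ℤ), (2 : ℤ))] : List (ℤ × ℤ)).toFinset,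
   ([((0 : ℤ), (2 : ℤ)), ((1 : ℤ), (1 : ℤ)), ((1 : ℤ), (2 : ℤ)), ((2 : ℤ), (0 : ℤ)), ((2 : ℤ), (1 : ℤ))] : List (ℤ × ℤ)).toFinset],
  [([((0 : ℤ), (0 : ℤ)), ((0 : ℤ), (1 : ℤ)), ((1 : ℤ), (1 : ℤ)), ((2 : ℤ), (1 : ℤ)), ((2 : ℤ), (2 : ℤ))] : List (ℤ × ℤ)).toFinset,
   ([((0 : ℤ), (2 : ℤ)), ((1 : ℤ), (0 : ℤ)), ((1 : ℤ), (1 : ℤ)), ((1 : ℤ), (2 : ℤ)), ((2 : ℤ), (0 : ℤ))] : List (ℤ × ℤ)).toFinset],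
  [([((0 : ℤ), (0 : ℤ)), ((1 : ℤ), (0 : ℤ)), ((1 : ℤ), (1 : ℤ)), ((1 : ℤ), (2 : ℤ)), ((2 : ℤ), (1 : ℤ))] : List (ℤ × ℤ)).toFinset,
   ([((0 : ℤ), (1 : ℤ)), ((1 : ℤ), (1 : ℤ)), ((1 : ℤ), (2 : ℤ)), ((2 : ℤ), (0 : ℤ)), ((2 : ℤ), (1 : ℤ))] : List (ℤ × ℤ)).toFinset,
   ([((0 : ℤ), (1 : ℤ)), ((1 : ℤ), (0 : ℤ)), ((1 : ℤ), (1 : ℤ)), ((1 : ℤ), (2 : ℤ)), ((2 : ℤ), (2 : ℤ))] : List (ℤ × ℤ)).toFinset,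
   ([((0 : ℤ), (1 : ℤ)), ((0 : ℤ), (2 : ℤ)), ((1 : ℤ), (0 : ℤ)), ((1 : ℤ), (1 : ℤ)), ((2 : ℤ), (1 : ℤ))] : List (ℤ × ℤ)).toFinset],
  [([((0 : ℤ), (0 : ℤ)), ((1 : ℤ), (0 : ℤ)), ((1 : ℤ), (1 : ℤ)), ((1 : ℤ), (2 : ℤ)), ((2 : ℤ), (2 : ℤ))] : List (ℤ × ℤ)).toFinset,
   ([((0 : ℤ), (1 : ℤ)), ((0 : ℤ), (2 : ℤ)), ((1 : ℤ), (1 : ℤ)), ((2 : ℤ), (0 : ℤ)), ((2 : ℤ), (1 : ℤ))] : List (ℤ × ℤ)).toFinset],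
  [([((0 : ℤ), (0 : ℤ)), ((1 : ℤ), (0 : ℤ)), ((1 : ℤ), (1 : ℤ)), ((2 : ℤ), (1 : ℤ)), ((3 : ℤ), (1 : ℤ))] : List (ℤ × ℤ)).toFinset,
   ([((0 : ℤ), (1 : ℤ)), ((0 : ℤ), (2 : ℤ)), ((0 : ℤ), (3 : ℤ)), ((1 : ℤ), (0 : ℤ)), ((1 : ℤ), (1 : ℤ))] : List (ℤ × ℤ)).toFinset,
   ([((0 : ℤ), (0 : ℤ)), ((1 : ℤ), (0 : ℤ)), ((2 : ℤ), (0 : ℤ)), ((2 : ℤ), (1 : ℤ)), ((3 : ℤ), (1 : ℤ))] : List (ℤ × ℤ)).toFinset,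
   ([((0 : ℤ), (2 : ℤ)), ((0 : ℤ), (3 : ℤ)), ((1 : ℤ), (0 : ℤ)), ((1 : ℤ), (1 : ℤ)), ((1 : ℤ), (2 : ℤ))] : List (ℤ × ℤ)).toFinset],
  [([((0 : ℤ), (1 : ℤ)), ((1 : ℤ), (0 : ℤ)), ((1 : ℤ), (1 : ℤ)), ((1 : ℤ), (2 : ℤ)), ((2 : ℤ), (1 : ℤ))] : List (ℤ × ℤ)).toFinset]]

def L5 : List (Finset (ℤ × ℤ)) := L5c.flatten

def W2 : List (Finset (ℤ × ℤ) × Finset (ℤ × ℤ) × (ℤ × ℤ)) := [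
  (([((0 : ℤ), (0 : ℤ)), ((0 : ℤ), (1 : ℤ))] : List (ℤ × ℤ)).toFinset, ([((0 : ℤ), (0 : ℤ))] : List (ℤ × ℤ)).toFinset, ((0 : ℤ), (-1 : ℤ))),
  (([((0 : ℤ), (0 : ℤ)), ((1 : ℤ), (0 : ℤ))] : List (ℤ × ℤ)).toFinset, ([((0 : ℤ), (0 : ℤ))] : List (ℤ × ℤ)).toFinset, ((-1 : ℤ), (0 : ℤ)))]

def W3 : List (Finset (ℤ × ℤ) × Finset (ℤ × ℤ) × (ℤ × ℤ)) := [
  (([((0 : ℤ), (0 : ℤ)), ((0 : ℤ), (1 : ℤ)), ((0 : ℤ), (2 : ℤ))] : List (ℤ × ℤ)).toFinset, ([((0 : ℤ), (0 : ℤ)), ((0 : ℤ), (1 : ℤ))] : List (ℤ × ℤ)).toFinset, ((0 : ℤ), (-1 : ℤ))),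
  (([((0 : ℤ), (0 : ℤ)), ((0 : ℤ), (1 : ℤ)), ((1 : ℤ), (0 : ℤ))] : List (ℤ × ℤ)).toFinset, ([((0 : ℤ), (0 : ℤ)), ((1 : ℤ), (0 : ℤ))] : List (ℤ × ℤ)).toFinset, ((0 : ℤ), (1 : ℤ))),
  (([((0 : ℤ), (0 : ℤ)), ((0 : ℤ), (1 : ℤ)), ((1 : ℤ), (1 : ℤ))] : List (ℤ × ℤ)).toFinset, ([((0 : ℤ), (0 : ℤ)), ((1 : ℤ), (0 : ℤ))] : List (ℤ × ℤ)).toFinset, ((0 : ℤ), (-1 : ℤ))),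
  (([((0 : ℤ), (0 : ℤ)), ((1 : ℤ), (0 : ℤ)), ((1 : ℤ), (1 : ℤ))] : List (ℤ × ℤ)).toFinset, ([((0 : ℤ), (0 : ℤ)), ((0 : ℤ), (1 : ℤ))] : List (ℤ × ℤ)).toFinset, ((-1 : ℤ), (0 : ℤ))),
  (([((0 : ℤ), (0 : ℤ)), ((1 : ℤ), (0 : ℤ)), ((2 : ℤ), (0 : ℤ))] : List (ℤ × ℤ)).toFinset, ([((0 : ℤ), (0 : ℤ)), ((1 : ℤ), (0 : ℤ))] : List (ℤ × ℤ)).toFinset, ((-1 : ℤ), (0 : ℤ))),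
  (([((0 : ℤ), (1 : ℤ)), ((1 : ℤ), (0 : ℤ)), ((1 : ℤ), (1 : ℤ))] : List (ℤ × ℤ)).toFinset, ([((0 : ℤ), (0 : ℤ)), ((0 : ℤ), (1 : ℤ))] : List (ℤ × ℤ)).toFinset, ((-1 : ℤ), (1 : ℤ)))]

def W4 : List (Finset (ℤ × ℤ) × Finset (ℤ × ℤ) × (ℤ × ℤ)) := [
  (([((0 : ℤ), (0 : ℤ)), ((0 : ℤ), (1 : ℤ)), ((0 : ℤ), (2 : ℤ)), ((0 : ℤ), (3 : ℤ))] : List (ℤ × ℤ)).toFinset, ([((0 : ℤ), (0 : ℤ)), ((0 : ℤ), (1 : ℤ)), ((0 : ℤ), (2 : ℤ))] : List (ℤ × ℤ)).toFinset, ((0 : ℤ), (-1 : ℤ))),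
  (([((0 : ℤ), (0 : ℤ)), ((0 : ℤ), (1 : ℤ)), ((0 : ℤ), (2 : ℤ)), ((1 : ℤ), (0 : ℤ))] : List (ℤ × ℤ)).toFinset, ([((0 : ℤ), (0 : ℤ)), ((0 : ℤ), (1 : ℤ)), ((1 : ℤ), (0 : ℤ))] : List (ℤ × ℤ)).toFinset, ((0 : ℤ), (2 : ℤ))),
  (([((0 : ℤ), (0 : ℤ)), ((0 : ℤ), (1 : ℤ)), ((0 : ℤ), (2 : ℤ)), ((1 : ℤ), (1 : ℤ))] : List (ℤ × ℤ)).toFinset, ([((0 : ℤ), (0 : ℤ)), ((0 : ℤ), (1 : ℤ)), ((1 : ℤ), (0 : ℤ))] : List (ℤ × ℤ)).toFinset, ((0 : ℤ), (-1 : ℤ))),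
  (([((0 : ℤ), (0 : ℤ)), ((0 : ℤ), (1 : ℤ)), ((0 : ℤ), (2 : ℤ)), ((1 : ℤ), (2 : ℤ))] : List (ℤ × ℤ)).toFinset, ([((0 : ℤ), (0 : ℤ)), ((0 : ℤ), (1 : ℤ)), ((1 : ℤ), (1 : ℤ))] : List (ℤ × ℤ)).toFinset, ((0 : ℤ), (-1 : ℤ))),
  (([((0 : ℤ), (0 : ℤ)), ((0 : ℤ), (1 : ℤ)), ((1 : ℤ), (0 : ℤ)), ((1 : ℤ), (1 : ℤ))] : List (ℤ × ℤ)).toFinset, ([((0 : ℤ), (1 : ℤ)), ((1 : ℤ), (0 : ℤ)), ((1 : ℤ), (1 : ℤ))] : List (ℤ × ℤ)).toFinset, ((0 : ℤ), (0 : ℤ))),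
  (([((0 : ℤ), (0 : ℤ)), ((0 : ℤ), (1 : ℤ)), ((1 : ℤ), (0 : ℤ)), ((2 : ℤ), (0 : ℤ))] : List (ℤ × ℤ)).toFinset, ([((0 : ℤ), (0 : ℤ)), ((1 : ℤ), (0 : ℤ)), ((2 : ℤ), (0 : ℤ))] : List (ℤ × ℤ)).toFinset, ((0 : ℤ), (1 : ℤ))),
  (([((0 : ℤ), (0 : ℤ)), ((0 : ℤ), (1 : ℤ)), ((1 : ℤ), (1 : ℤ)), ((1 : ℤ), (2 : ℤ))] : List (ℤ × ℤ)).toFinset, ([((0 : ℤ), (0 : ℤ)), ((1 : ℤ), (0 : ℤ)), ((1 : ℤ), (1 : ℤ))] : List (ℤ × ℤ)).toFinset, ((0 : ℤ), (-1 : ℤ))),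
  (([((0 : ℤ), (0 : ℤ)), ((0 : ℤ), (1 : ℤ)), ((1 : ℤ), (1 : ℤ)), ((2 : ℤ), (1 : ℤ))] : List (ℤ × ℤ)).toFinset, ([((0 : ℤ), (0 : ℤ)), ((1 : ℤ), (0 : ℤ)), ((2 : ℤ), (0 : ℤ))] : List (ℤ × ℤ)).toFinset, ((0 : ℤ), (-1 : ℤ))),
  (([((0 : ℤ), (0 : ℤ)), ((1 : ℤ), (0 : ℤ)), ((1 : ℤ), (1 : ℤ)), ((1 : ℤ), (2 : ℤ))] : List (ℤ × ℤ)).toFinset, ([((0 : ℤ), (0 : ℤ)), ((0 : ℤ), (1 : ℤ)), ((0 : ℤ), (2 : ℤ))] : List (ℤ × ℤ)).toFinset, ((-1 : ℤ), (0 : ℤ))),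
  (([((0 : ℤ), (0 : ℤ)), ((1 : ℤ), (0 : ℤ)), ((1 : ℤ), (1 : ℤ)), ((2 : ℤ), (0 : ℤ))] : List (ℤ × ℤ)).toFinset, ([((0 : ℤ), (0 : ℤ)), ((0 : ℤ), (1 : ℤ)), ((1 : ℤ), (0 : ℤ))] : List (ℤ × ℤ)).toFinset, ((-1 : ℤ), (0 : ℤ))),
  (([((0 : ℤ), (0 : ℤ)), ((1 : ℤ), (0 : ℤ)), ((1 : ℤ), (1 : ℤ)), ((2 : ℤ), (1 : ℤ))] : List (ℤ × ℤ)).toFinset, ([((0 : ℤ), (0 : ℤ)), ((0 : ℤ), (1 : ℤ)), ((1 : ℤ), (1 : ℤ))] : List (ℤ × ℤ)).toFinset, ((-1 : ℤ), (0 : ℤ))),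
  (([((0 : ℤ), (0 : ℤ)), ((1 : ℤ), (0 : ℤ)), ((2 : ℤ), (0 : ℤ)), ((2 : ℤ), (1 : ℤ))] : List (ℤ × ℤ)).toFinset, ([((0 : ℤ), (0 : ℤ)), ((1 : ℤ), (0 : ℤ)), ((1 : ℤ), (1 : ℤ))] : List (ℤ × ℤ)).toFinset, ((-1 : ℤ), (0 : ℤ))),
  (([((0 : ℤ), (0 : ℤ)), ((1 : ℤ), (0 : ℤ)), ((2 : ℤ), (0 : ℤ)), ((3 : ℤ), (0 : ℤ))] : List (ℤ × ℤ)).toFinset, ([((0 : ℤ), (0 : ℤ)), ((1 : ℤ), (0 : ℤ)), ((2 : ℤ), (0 : ℤ))] : List (ℤ × ℤ)).toFinset, ((-1 : ℤ), (0 : ℤ))),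
  (([((0 : ℤ), (1 : ℤ)), ((0 : ℤ), (2 : ℤ)), ((1 : ℤ), (0 : ℤ)), ((1 : ℤ), (1 : ℤ))] : List (ℤ × ℤ)).toFinset, ([((0 : ℤ), (1 : ℤ)), ((1 : ℤ), (0 : ℤ)), ((1 : ℤ), (1 : ℤ))] : List (ℤ × ℤ)).toFinset, ((0 : ℤ), (2 : ℤ))),
  (([((0 : ℤ), (1 : ℤ)), ((1 : ℤ), (0 : ℤ)), ((1 : ℤ), (1 : ℤ)), ((1 : ℤ), (2 : ℤ))] : List (ℤ × ℤ)).toFinset, ([((0 : ℤ), (0 : ℤ)), ((0 : ℤ), (1 : ℤ)), ((0 : ℤ), (2 : ℤ))] : List (ℤ × ℤ)).toFinset, ((-1 : ℤ), (1 : ℤ))),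
  (([((0 : ℤ), (1 : ℤ)), ((1 : ℤ), (0 : ℤ)), ((1 : ℤ), (1 : ℤ)), ((2 : ℤ), (0 : ℤ))] : List (ℤ × ℤ)).toFinset, ([((0 : ℤ), (0 : ℤ)), ((0 : ℤ), (1 : ℤ)), ((1 : ℤ), (0 : ℤ))] : List (ℤ × ℤ)).toFinset, ((-1 : ℤ), (1 : ℤ))),
  (([((0 : ℤ), (1 : ℤ)), ((1 : ℤ), (0 : ℤ)), ((1 : ℤ), (1 : ℤ)), ((2 : ℤ), (1 : ℤ))] : List (ℤ × ℤ)).toFinset, ([((0 : ℤ), (0 : ℤ)), ((0 : ℤ), (1 : ℤ)), ((1 : ℤ), (1 : ℤ))] : List (ℤ × ℤ)).toFinset, ((-1 : ℤ), (1 : ℤ))),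
  (([((0 : ℤ), (1 : ℤ)), ((1 : ℤ), (1 : ℤ)), ((2 : ℤ), (0 : ℤ)), ((2 : ℤ), (1 : ℤ))] : List (ℤ × ℤ)).toFinset, ([((0 : ℤ), (1 : ℤ)), ((1 : ℤ), (0 : ℤ)), ((1 : ℤ), (1 : ℤ))] : List (ℤ × ℤ)).toFinset, ((-1 : ℤ), (1 : ℤ))),
  (([((0 : ℤ), (2 : ℤ)), ((1 : ℤ), (0 : ℤ)), ((1 : ℤ), (1 : ℤ)), ((1 : ℤ), (2 : ℤ))] : List (ℤ × ℤ)).toFinset, ([((0 : ℤ), (0 : ℤ)), ((0 : ℤ), (1 : ℤ)), ((0 : ℤ), (2 : ℤ))] : List (ℤ × ℤ)).toFinset, ((-1 : ℤ), (2 : ℤ)))]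

def W5 : List (Finset (ℤ × ℤ) × Finset (ℤ × ℤ) × (ℤ × ℤ)) := [
  (([((0 : ℤ), (0 : ℤ)), ((0 : ℤ), (1 : ℤ)), ((0 : ℤ), (2 : ℤ)), ((0 : ℤ), (3 : ℤ)), ((0 : ℤ), (4 : ℤ))] : List (ℤ × ℤ)).toFinset, ([((0 : ℤ), (0 : ℤ)), ((0 : ℤ), (1 : ℤ)), ((0 : ℤ), (2 : ℤ)), ((0 : ℤ), (3 : ℤ))] : List (ℤ × ℤ)).toFinset, ((0 : ℤ), (-1 : ℤ))),
  (([((0 : ℤ), (0 : ℤ)), ((0 : ℤ), (1 : ℤ)), ((0 : ℤ), (2 : ℤ)), ((0 : ℤ), (3 : ℤ)), ((1 : ℤ), (0 : ℤ))] : List (ℤ × ℤ)).toFinset, ([((0 : ℤ), (0 : ℤ)), ((0 : ℤ), (1 : ℤ)), ((0 : ℤ), (2 : ℤ)), ((1 : ℤ), (0 : ℤ))] : List (ℤ × ℤ)).toFinset, ((0 : ℤ), (3 : ℤ))),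
  (([((0 : ℤ), (0 : ℤ)), ((0 : ℤ), (1 : ℤ)), ((0 : ℤ), (2 : ℤ)), ((0 : ℤ), (3 : ℤ)), ((1 : ℤ), (1 : ℤ))] : List (ℤ × ℤ)).toFinset, ([((0 : ℤ), (0 : ℤ)), ((0 : ℤ), (1 : ℤ)), ((0 : ℤ), (2 : ℤ)), ((1 : ℤ), (0 : ℤ))] : List (ℤ × ℤ)).toFinset, ((0 : ℤ), (-1 : ℤ))),
  (([((0 : ℤ), (0 : ℤ)), ((0 : ℤ), (1 : ℤ)), ((0 : ℤ), (2 : ℤ)), ((0 : ℤ), (3 : ℤ)), ((1 : ℤ), (2 : ℤ))] : List (ℤ × ℤ)).toFinset, ([((0 : ℤ), (0 : ℤ)), ((0 : ℤ), (1 : ℤ)), ((0 : ℤ), (2 : ℤ)), ((1 : ℤ), (1 : ℤ))] : List (ℤ × ℤ)).toFinset, ((0 : ℤ), (-1 : ℤ))),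
  (([((0 : ℤ), (0 : ℤ)), ((0 : ℤ), (1 : ℤ)), ((0 : ℤ), (2 : ℤ)), ((0 : ℤ), (3 : ℤ)), ((1 : ℤ), (3 : ℤ))] : List (ℤ × ℤ)).toFinset, ([((0 : ℤ), (0 : ℤ)), ((0 : ℤ), (1 : ℤ)), ((0 : ℤ), (2 : ℤ)), ((1 : ℤ), (2 : ℤ))] : List (ℤ × ℤ)).toFinset, ((0 : ℤ), (-1 : ℤ))),
  (([((0 : ℤ), (0 : ℤ)), ((0 : ℤ), (1 : ℤ)), ((0 : ℤ), (2 : ℤ)), ((1 : ℤ), (0 : ℤ)), ((1 : ℤ), (1 : ℤ))] : List (ℤ × ℤ)).toFinset, ([((0 : ℤ), (1 : ℤ)), ((0 : ℤ), (2 : ℤ)), ((1 : ℤ), (0 : ℤ)), ((1 : ℤ), (1 : ℤ))] : List (ℤ × ℤ)).toFinset, ((0 : ℤ), (0 : ℤ))),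
  (([((0 : ℤ), (0 : ℤ)), ((0 : ℤ), (1 : ℤ)), ((0 : ℤ), (2 : ℤ)), ((1 : ℤ), (0 : ℤ)), ((1 : ℤ), (2 : ℤ))] : List (ℤ × ℤ)).toFinset, ([((0 : ℤ), (0 : ℤ)), ((0 : ℤ), (1 : ℤ)), ((0 : ℤ), (2 : ℤ)), ((1 : ℤ), (2 : ℤ))] : List (ℤ × ℤ)).toFinset, ((1 : ℤ), (0 : ℤ))),
  (([((0 : ℤ), (0 : ℤ)), ((0 : ℤ), (1 : ℤ)), ((0 : ℤ), (2 : ℤ)), ((1 : ℤ), (0 : ℤ)), ((2 : ℤ), (0 : ℤ))] : List (ℤ × ℤ)).toFinset, ([((0 : ℤ), (0 : ℤ)), ((0 : ℤ), (1 : ℤ)), ((1 : ℤ), (0 : ℤ)), ((2 : ℤ), (0 : ℤ))] : List (ℤ × ℤ)).toFinset, ((0 : ℤ), (2 : ℤ))),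
  (([((0 : ℤ), (0 : ℤ)), ((0 : ℤ), (1 : ℤ)), ((0 : ℤ), (2 : ℤ)), ((1 : ℤ), (1 : ℤ)), ((1 : ℤ), (2 : ℤ))] : List (ℤ × ℤ)).toFinset, ([((0 : ℤ), (0 : ℤ)), ((0 : ℤ), (1 : ℤ)), ((1 : ℤ), (0 : ℤ)), ((1 : ℤ), (1 : ℤ))] : List (ℤ × ℤ)).toFinset, ((0 : ℤ), (-1 : ℤ))),
  (([((0 : ℤ), (0 : ℤ)), ((0 : ℤ), (1 : ℤ)), ((0 : ℤ), (2 : ℤ)), ((1 : ℤ), (1 : ℤ)), ((2 : ℤ), (1 : ℤ))] : List (ℤ × ℤ)).toFinset, ([((0 : ℤ), (0 : ℤ)), ((0 : ℤ), (1 : ℤ)), ((1 : ℤ), (0 : ℤ)), ((2 : ℤ), (0 : ℤ))] : List (ℤ × ℤ)).toFinset, ((0 : ℤ), (-1 : ℤ))),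
  (([((0 : ℤ), (0 : ℤ)), ((0 : ℤ), (1 : ℤ)), ((0 : ℤ), (2 : ℤ)), ((1 : ℤ), (2 : ℤ)), ((1 : ℤ), (3 : ℤ))] : List (ℤ × ℤ)).toFinset, ([((0 : ℤ), (0 : ℤ)), ((0 : ℤ), (1 : ℤ)), ((1 : ℤ), (1 : ℤ)), ((1 : ℤ), (2 : ℤ))] : List (ℤ × ℤ)).toFinset, ((0 : ℤ), (-1 : ℤ))),
  (([((0 : ℤ), (0 : ℤ)), ((0 : ℤ), (1 : ℤ)), ((0 : ℤ), (2 : ℤ)), ((1 : ℤ), (2 : ℤ)), ((2 : ℤ), (2 : ℤ))] : List (ℤ × ℤ)).toFinset, ([((0 : ℤ), (0 : ℤ)), ((0 : ℤ), (1 : ℤ)), ((1 : ℤ), (1 : ℤ)), ((2 : ℤ), (1 : ℤ))] : List (ℤ × ℤ)).toFinset, ((0 : ℤ), (-1 : ℤ))),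
  (([((0 : ℤ), (0 : ℤ)), ((0 : ℤ), (1 : ℤ)), ((1 : ℤ), (0 : ℤ)), ((1 : ℤ), (1 : ℤ)), ((1 : ℤ), (2 : ℤ))] : List (ℤ × ℤ)).toFinset, ([((0 : ℤ), (1 : ℤ)), ((1 : ℤ), (0 : ℤ)), ((1 : ℤ), (1 : ℤ)), ((1 : ℤ), (2 : ℤ))] : List (ℤ × ℤ)).toFinset, ((0 : ℤ), (0 : ℤ))),
  (([((0 : ℤ), (0 : ℤ)), ((0 : ℤ), (1 : ℤ)), ((1 : ℤ), (0 : ℤ)), ((1 : ℤ), (1 : ℤ)), ((2 : ℤ), (0 : ℤ))] : List (ℤ × ℤ)).toFinset, ([((0 : ℤ), (1 : ℤ)), ((1 : ℤ), (0 : ℤ)), ((1 : ℤ), (1 : ℤ)), ((2 : ℤ), (0 : ℤ))] : List (ℤ × ℤ)).toFinset, ((0 : ℤ), (0 : ℤ))),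
  (([((0 : ℤ), (0 : ℤ)), ((0 : ℤ), (1 : ℤ)), ((1 : ℤ), (0 : ℤ)), ((1 : ℤ), (1 : ℤ)), ((2 : ℤ), (1 : ℤ))] : List (ℤ × ℤ)).toFinset, ([((0 : ℤ), (1 : ℤ)), ((1 : ℤ), (0 : ℤ)), ((1 : ℤ), (1 : ℤ)), ((2 : ℤ), (1 : ℤ))] : List (ℤ × ℤ)).toFinset, ((0 : ℤ), (0 : ℤ))),
  (([((0 : ℤ), (0 : ℤ)), ((0 : ℤ), (1 : ℤ)), ((1 : ℤ), (0 : ℤ)), ((2 : ℤ), (0 : ℤ)), ((2 : ℤ), (1 : ℤ))] : List (ℤ × ℤ)).toFinset, ([((0 : ℤ), (0 : ℤ)), ((1 : ℤ), (0 : ℤ)), ((2 : ℤ), (0 : ℤ)), ((2 : ℤ), (1 : ℤ))] : List (ℤ × ℤ)).toFinset, ((0 : ℤ), (1 : ℤ))),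
  (([((0 : ℤ), (0 : ℤ)), ((0 : ℤ), (1 : ℤ)), ((1 : ℤ), (0 : ℤ)), ((2 : ℤ), (0 : ℤ)), ((3 : ℤ), (0 : ℤ))] : List (ℤ × ℤ)).toFinset, ([((0 : ℤ), (0 : ℤ)), ((1 : ℤ), (0 : ℤ)), ((2 : ℤ), (0 : ℤ)), ((3 : ℤ), (0 : ℤ))] : List (ℤ × ℤ)).toFinset, ((0 : ℤ), (1 : ℤ))),
  (([((0 : ℤ), (0 : ℤ)), ((0 : ℤ), (1 : ℤ)), ((1 : ℤ), (1 : ℤ)), ((1 : ℤ), (2 : ℤ)), ((1 : ℤ), (3 : ℤ))] : List (ℤ × ℤ)).toFinset, ([((0 : ℤ), (0 : ℤ)), ((1 : ℤ), (0 : ℤ)), ((1 : ℤ), (1 : ℤ)), ((1 : ℤ), (2 : ℤ))] : List (ℤ × ℤ)).toFinset, ((0 : ℤ), (-1 : ℤ))),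
  (([((0 : ℤ), (0 : ℤ)), ((0 : ℤ), (1 : ℤ)), ((1 : ℤ), (1 : ℤ)), ((1 : ℤ), (2 : ℤ)), ((2 : ℤ), (1 : ℤ))] : List (ℤ × ℤ)).toFinset, ([((0 : ℤ), (0 : ℤ)), ((1 : ℤ), (0 : ℤ)), ((1 : ℤ), (1 : ℤ)), ((2 : ℤ), (0 : ℤ))] : List (ℤ × ℤ)).toFinset, ((0 : ℤ), (-1 : ℤ))),
  (([((0 : ℤ), (0 : ℤ)), ((0 : ℤ), (1 : ℤ)), ((1 : ℤ), (1 : ℤ)), ((1 : ℤ), (2 : ℤ)), ((2 : ℤ), (2 : ℤ))] : List (ℤ × ℤ)).toFinset, ([((0 : ℤ), (0 : ℤ)), ((1 : ℤ), (0 : ℤ)), ((1 : ℤ), (1 : ℤ)), ((2 : ℤ), (1 : ℤ))] : List (ℤ × ℤ)).toFinset, ((0 : ℤ), (-1 : ℤ))),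
  (([((0 : ℤ), (0 : ℤ)), ((0 : ℤ), (1 : ℤ)), ((1 : ℤ), (1 : ℤ)), ((2 : ℤ), (0 : ℤ)), ((2 : ℤ), (1 : ℤ))] : List (ℤ × ℤ)).toFinset, ([((0 : ℤ), (1 : ℤ)), ((1 : ℤ), (1 : ℤ)), ((2 : ℤ), (0 : ℤ)), ((2 : ℤ), (1 : ℤ))] : List (ℤ × ℤ)).toFinset, ((0 : ℤ), (0 : ℤ))),
  (([((0 : ℤ), (0 : ℤ)), ((0 : ℤ), (1 : ℤ)), ((1 : ℤ), (1 : ℤ)), ((2 : ℤ), (1 : ℤ)), ((2 : ℤ), (2 : ℤ))] : List (ℤ × ℤ)).toFinset, ([((0 : ℤ), (0 : ℤ)), ((1 : ℤ), (0 : ℤ)), ((2 : ℤ), (0 : ℤ)), ((2 : ℤ), (1 : ℤ))] : List (ℤ × ℤ)).toFinset, ((0 : ℤ), (-1 : ℤ))),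
  (([((0 : ℤ), (0 : ℤ)), ((0 : ℤ), (1 : ℤ)), ((1 : ℤ), (1 : ℤ)), ((2 : ℤ), (1 : ℤ)), ((3 : ℤ), (1 : ℤ))] : List (ℤ × ℤ)).toFinset, ([((0 : ℤ), (0 : ℤ)), ((1 : ℤ), (0 : ℤ)), ((2 : ℤ), (0 : ℤ)), ((3 : ℤ), (0 : ℤ))] : List (ℤ × ℤ)).toFinset, ((0 : ℤ), (-1 : ℤ))),
  (([((0 : ℤ), (0 : ℤ)), ((0 : ℤ), (2 : ℤ)), ((1 : ℤ), (0 : ℤ)), ((1 : ℤ), (1 : ℤ)), ((1 : ℤ), (2 : ℤ))] : List (ℤ × ℤ)).toFinset, ([((0 : ℤ), (2 : ℤ)), ((1 : ℤ), (0 : ℤ)), ((1 : ℤ), (1 : ℤ)), ((1 : ℤ), (2 : ℤ))] : List (ℤ × ℤ)).toFinset, ((0 : ℤ), (0 : ℤ))),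
  (([((0 : ℤ), (0 : ℤ)), ((1 : ℤ), (0 : ℤ)), ((1 : ℤ), (1 : ℤ)), ((1 : ℤ), (2 : ℤ)), ((1 : ℤ), (3 : ℤ))] : List (ℤ × ℤ)).toFinset, ([((0 : ℤ), (0 : ℤ)), ((0 : ℤ), (1 : ℤ)), ((0 : ℤ), (2 : ℤ)), ((0 : ℤ), (3 : ℤ))] : List (ℤ × ℤ)).toFinset, ((-1 : ℤ), (0 : ℤ))),
  (([((0 : ℤ), (0 : ℤ)), ((1 : ℤ), (0 : ℤ)), ((1 : ℤ), (1 : ℤ)), ((1 : ℤ), (2 : ℤ)), ((2 : ℤ), (0 : ℤ))] : List (ℤ × ℤ)).toFinset, ([((0 : ℤ), (0 : ℤ)), ((0 : ℤ), (1 : ℤ)), ((0 : ℤ), (2 : ℤ)), ((1 : ℤ), (0 : ℤ))] : List (ℤ × ℤ)).toFinset, ((-1 : ℤ), (0 : ℤ))),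
  (([((0 : ℤ), (0 : ℤ)), ((1 : ℤ), (0 : ℤ)), ((1 : ℤ), (1 : ℤ)), ((1 : ℤ), (2 : ℤ)), ((2 : ℤ), (1 : ℤ))] : List (ℤ × ℤ)).toFinset, ([((0 : ℤ), (0 : ℤ)), ((0 : ℤ), (1 : ℤ)), ((0 : ℤ), (2 : ℤ)), ((1 : ℤ), (1 : ℤ))] : List (ℤ × ℤ)).toFinset, ((-1 : ℤ), (0 : ℤ))),
  (([((0 : ℤ), (0 : ℤ)), ((1 : ℤ), (0 : ℤ)), ((1 : ℤ), (1 : ℤ)), ((1 : ℤ), (2 : ℤ)), ((2 : ℤ), (2 : ℤ))] : List (ℤ × ℤ)).toFinset, ([((0 : ℤ), (0 : ℤ)), ((0 : ℤ), (1 : ℤ)), ((0 : ℤ), (2 : ℤ)), ((1 : ℤ), (2 : ℤ))] : List (ℤ × ℤ)).toFinset, ((-1 : ℤ), (0 : ℤ))),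
  (([((0 : ℤ), (0 : ℤ)), ((1 : ℤ), (0 : ℤ)), ((1 : ℤ), (1 : ℤ)), ((2 : ℤ), (0 : ℤ)), ((2 : ℤ), (1 : ℤ))] : List (ℤ × ℤ)).toFinset, ([((0 : ℤ), (0 : ℤ)), ((0 : ℤ), (1 : ℤ)), ((1 : ℤ), (0 : ℤ)), ((1 : ℤ), (1 : ℤ))] : List (ℤ × ℤ)).toFinset, ((-1 : ℤ), (0 : ℤ))),
  (([((0 : ℤ), (0 : ℤ)), ((1 : ℤ), (0 : ℤ)), ((1 : ℤ), (1 : ℤ)), ((2 : ℤ), (0 : ℤ)), ((3 : ℤ), (0 : ℤ))] : List (ℤ × ℤ)).toFinset, ([((0 : ℤ), (0 : ℤ)), ((0 : ℤ), (1 : ℤ)), ((1 : ℤ), (0 : ℤ)), ((2 : ℤ), (0 : ℤ))] : List (ℤ × ℤ)).toFinset, ((-1 : ℤ), (0 : ℤ))),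
  (([((0 : ℤ), (0 : ℤ)), ((1 : ℤ), (0 : ℤ)), ((1 : ℤ), (1 : ℤ)), ((2 : ℤ), (1 : ℤ)), ((2 : ℤ), (2 : ℤ))] : List (ℤ × ℤ)).toFinset, ([((0 : ℤ), (0 : ℤ)), ((0 : ℤ), (1 : ℤ)), ((1 : ℤ), (1 : ℤ)), ((1 : ℤ), (2 : ℤ))] : List (ℤ × ℤ)).toFinset, ((-1 : ℤ), (0 : ℤ))),
  (([((0 : ℤ), (0 : ℤ)), ((1 : ℤ), (0 : ℤ)), ((1 : ℤ), (1 : ℤ)), ((2 : ℤ), (1 : ℤ)), ((3 : ℤ), (1 : ℤ))] : List (ℤ × ℤ)).toFinset, ([((0 : ℤ), (0 : ℤ)), ((0 : ℤ), (1 : ℤ)), ((1 : ℤ), (1 : ℤ)), ((2 : ℤ), (1 : ℤ))] : List (ℤ × ℤ)).toFinset, ((-1 : ℤ), (0 : ℤ))),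
  (([((0 : ℤ), (0 : ℤ)), ((1 : ℤ), (0 : ℤ)), ((2 : ℤ), (0 : ℤ)), ((2 : ℤ), (1 : ℤ)), ((2 : ℤ), (2 : ℤ))] : List (ℤ × ℤ)).toFinset, ([((0 : ℤ), (0 : ℤ)), ((1 : ℤ), (0 : ℤ)), ((1 : ℤ), (1 : ℤ)), ((1 : ℤ), (2 : ℤ))] : List (ℤ × ℤ)).toFinset, ((-1 : ℤ), (0 : ℤ))),
  (([((0 : ℤ), (0 : ℤ)), ((1 : ℤ), (0 : ℤ)), ((2 : ℤ), (0 : ℤ)), ((2 : ℤ), (1 : ℤ)), ((3 : ℤ), (0 : ℤ))] : List (ℤ × ℤ)).toFinset, ([((0 : ℤ), (0 : ℤ)), ((1 : ℤ), (0 : ℤ)), ((1 : ℤ), (1 : ℤ)), ((2 : ℤ), (0 : ℤ))] : List (ℤ × ℤ)).toFinset, ((-1 : ℤ), (0 : ℤ))),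
  (([((0 : ℤ), (0 : ℤ)), ((1 : ℤ), (0 : ℤ)), ((2 : ℤ), (0 : ℤ)), ((2 : ℤ), (1 : ℤ)), ((3 : ℤ), (1 : ℤ))] : List (ℤ × ℤ)).toFinset, ([((0 : ℤ), (0 : ℤ)), ((1 : ℤ), (0 : ℤ)), ((1 : ℤ), (1 : ℤ)), ((2 : ℤ), (1 : ℤ))] : List (ℤ × ℤ)).toFinset, ((-1 : ℤ), (0 : ℤ))),
  (([((0 : ℤ), (0 : ℤ)), ((1 : ℤ), (0 : ℤ)), ((2 : ℤ), (0 : ℤ)), ((3 : ℤ), (0 : ℤ)), ((3 : ℤ), (1 : ℤ))] : List (ℤ × ℤ)).toFinset, ([((0 : ℤ), (0 : ℤ)), ((1 : ℤ), (0 : ℤ)), ((2 : ℤ), (0 : ℤ)), ((2 : ℤ), (1 : ℤ))] : List (ℤ × ℤ)).toFinset, ((-1 : ℤ), (0 : ℤ))),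
  (([((0 : ℤ), (0 : ℤ)), ((1 : ℤ), (0 : ℤ)), ((2 : ℤ), (0 : ℤ)), ((3 : ℤ), (0 : ℤ)), ((4 : ℤ), (0 : ℤ))] : List (ℤ × ℤ)).toFinset, ([((0 : ℤ), (0 : ℤ)), ((1 : ℤ), (0 : ℤ)), ((2 : ℤ), (0 : ℤ)), ((3 : ℤ), (0 : ℤ))] : List (ℤ × ℤ)).toFinset, ((-1 : ℤ), (0 : ℤ))),
  (([((0 : ℤ), (1 : ℤ)), ((0 : ℤ), (2 : ℤ)), ((0 : ℤ), (3 : ℤ)), ((1 : ℤ), (0 : ℤ)), ((1 : ℤ), (1 : ℤ))] : List (ℤ × ℤ)).toFinset, ([((0 : ℤ), (1 : ℤ)), ((0 : ℤ), (2 : ℤ)), ((1 : ℤ), (0 : ℤ)), ((1 : ℤ), (1 : ℤ))] : List (ℤ × ℤ)).toFinset, ((0 : ℤ), (3 : ℤ))),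
  (([((0 : ℤ), (1 : ℤ)), ((0 : ℤ), (2 : ℤ)), ((1 : ℤ), (0 : ℤ)), ((1 : ℤ), (1 : ℤ)), ((1 : ℤ), (2 : ℤ))] : List (ℤ × ℤ)).toFinset, ([((0 : ℤ), (2 : ℤ)), ((1 : ℤ), (0 : ℤ)), ((1 : ℤ), (1 : ℤ)), ((1 : ℤ), (2 : ℤ))] : List (ℤ × ℤ)).toFinset, ((0 : ℤ), (1 : ℤ))),
  (([((0 : ℤ), (1 : ℤ)), ((0 : ℤ), (2 : ℤ)), ((1 : ℤ), (0 : ℤ)), ((1 : ℤ), (1 : ℤ)), ((2 : ℤ), (0 : ℤ))] : List (ℤ × ℤ)).toFinset, ([((0 : ℤ), (1 : ℤ)), ((1 : ℤ), (0 : ℤ)), ((1 : ℤ), (1 : ℤ)), ((2 : ℤ), (0 : ℤ))] : List (ℤ × ℤ)).toFinset, ((0 : ℤ), (2 : ℤ))),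
  (([((0 : ℤ), (1 : ℤ)), ((0 : ℤ), (2 : ℤ)), ((1 : ℤ), (0 : ℤ)), ((1 : ℤ), (1 : ℤ)), ((2 : ℤ), (1 : ℤ))] : List (ℤ × ℤ)).toFinset, ([((0 : ℤ), (1 : ℤ)), ((1 : ℤ), (0 : ℤ)), ((1 : ℤ), (1 : ℤ)), ((2 : ℤ), (1 : ℤ))] : List (ℤ × ℤ)).toFinset, ((0 : ℤ), (2 : ℤ))),
  (([((0 : ℤ), (1 : ℤ)), ((0 : ℤ), (2 : ℤ)), ((1 : ℤ), (1 : ℤ)), ((2 : ℤ), (0 : ℤ)), ((2 : ℤ), (1 : ℤ))] : List (ℤ × ℤ)).toFinset, ([((0 : ℤ), (1 : ℤ)), ((1 : ℤ), (1 : ℤ)), ((2 : ℤ), (0 : ℤ)), ((2 : ℤ), (1 : ℤ))] : List (ℤ × ℤ)).toFinset, ((0 : ℤ), (2 : ℤ))),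
  (([((0 : ℤ), (1 : ℤ)), ((1 : ℤ), (0 : ℤ)), ((1 : ℤ), (1 : ℤ)), ((1 : ℤ), (2 : ℤ)), ((1 : ℤ), (3 : ℤ))] : List (ℤ × ℤ)).toFinset, ([((0 : ℤ), (0 : ℤ)), ((0 : ℤ), (1 : ℤ)), ((0 : ℤ), (2 : ℤ)), ((0 : ℤ), (3 : ℤ))] : List (ℤ × ℤ)).toFinset, ((-1 : ℤ), (1 : ℤ))),
  (([((0 : ℤ), (1 : ℤ)), ((1 : ℤ), (0 : ℤ)), ((1 : ℤ), (1 : ℤ)), ((1 : ℤ), (2 : ℤ)), ((2 : ℤ), (0 : ℤ))] : List (ℤ × ℤ)).toFinset, ([((0 : ℤ), (0 : ℤ)), ((0 : ℤ), (1 : ℤ)), ((0 : ℤ), (2 : ℤ)), ((1 : ℤ), (0 : ℤ))] : List (ℤ × ℤ)).toFinset, ((-1 : ℤ), (1 : ℤ))),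
  (([((0 : ℤ), (1 : ℤ)), ((1 : ℤ), (0 : ℤ)), ((1 : ℤ), (1 : ℤ)), ((1 : ℤ), (2 : ℤ)), ((2 : ℤ), (1 : ℤ))] : List (ℤ × ℤ)).toFinset, ([((0 : ℤ), (0 : ℤ)), ((0 : ℤ), (1 : ℤ)), ((0 : ℤ), (2 : ℤ)), ((1 : ℤ), (1 : ℤ))] : List (ℤ × ℤ)).toFinset, ((-1 : ℤ), (1 : ℤ))),
  (([((0 : ℤ), (1 : ℤ)), ((1 : ℤ), (0 : ℤ)), ((1 : ℤ), (1 : ℤ)), ((1 : ℤ), (2 : ℤ)), ((2 : ℤ), (2 : ℤ))] : List (ℤ × ℤ)).toFinset, ([((0 : ℤ), (0 : ℤ)), ((0 : ℤ), (1 : ℤ)), ((0 : ℤ), (2 : ℤ)), ((1 : ℤ), (2 : ℤ))] : List (ℤ × ℤ)).toFinset, ((-1 : ℤ), (1 : ℤ))),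
  (([((0 : ℤ), (1 : ℤ)), ((1 : ℤ), (0 : ℤ)), ((1 : ℤ), (1 : ℤ)), ((2 : ℤ), (0 : ℤ)), ((2 : ℤ), (1 : ℤ))] : List (ℤ × ℤ)).toFinset, ([((0 : ℤ), (0 : ℤ)), ((0 : ℤ), (1 : ℤ)), ((1 : ℤ), (0 : ℤ)), ((1 : ℤ), (1 : ℤ))] : List (ℤ × ℤ)).toFinset, ((-1 : ℤ), (1 : ℤ))),
  (([((0 : ℤ), (1 : ℤ)), ((1 : ℤ), (0 : ℤ)), ((1 : ℤ), (1 : ℤ)), ((2 : ℤ), (0 : ℤ)), ((3 : ℤ), (0 : ℤ))] : List (ℤ × ℤ)).toFinset, ([((0 : ℤ), (0 : ℤ)), ((0 : ℤ), (1 : ℤ)), ((1 : ℤ), (0 : ℤ)), ((2 : ℤ), (0 : ℤ))] : List (ℤ × ℤ)).toFinset, ((-1 : ℤ), (1 : ℤ))),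
  (([((0 : ℤ), (1 : ℤ)), ((1 : ℤ), (0 : ℤ)), ((1 : ℤ), (1 : ℤ)), ((2 : ℤ), (1 : ℤ)), ((2 : ℤ), (2 : ℤ))] : List (ℤ × ℤ)).toFinset, ([((0 : ℤ), (0 : ℤ)), ((0 : ℤ), (1 : ℤ)), ((1 : ℤ), (1 : ℤ)), ((1 : ℤ), (2 : ℤ))] : List (ℤ × ℤ)).toFinset, ((-1 : ℤ), (1 : ℤ))),
  (([((0 : ℤ), (1 : ℤ)), ((1 : ℤ), (0 : ℤ)), ((1 : ℤ), (1 : ℤ)), ((2 : ℤ), (1 : ℤ)), ((3 : ℤ), (1 : ℤ))] : List (ℤ × ℤ)).toFinset, ([((0 : ℤ), (0 : ℤ)), ((0 : ℤ), (1 : ℤ)), ((1 : ℤ), (1 : ℤ)), ((2 : ℤ), (1 : ℤ))] : List (ℤ × ℤ)).toFinset, ((-1 : ℤ), (1 : ℤ))),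
  (([((0 : ℤ), (1 : ℤ)), ((1 : ℤ), (1 : ℤ)), ((1 : ℤ), (2 : ℤ)), ((2 : ℤ), (0 : ℤ)), ((2 : ℤ), (1 : ℤ))] : List (ℤ × ℤ)).toFinset, ([((0 : ℤ), (1 : ℤ)), ((0 : ℤ), (2 : ℤ)), ((1 : ℤ), (0 : ℤ)), ((1 : ℤ), (1 : ℤ))] : List (ℤ × ℤ)).toFinset, ((-1 : ℤ), (1 : ℤ))),
  (([((0 : ℤ), (1 : ℤ)), ((1 : ℤ), (1 : ℤ)), ((2 : ℤ), (0 : ℤ)), ((2 : ℤ), (1 : ℤ)), ((2 : ℤ), (2 : ℤ))] : List (ℤ × ℤ)).toFinset, ([((0 : ℤ), (1 : ℤ)), ((1 : ℤ), (0 : ℤ)), ((1 : ℤ), (1 : ℤ)), ((1 : ℤ), (2 : ℤ))] : List (ℤ × ℤ)).toFinset, ((-1 : ℤ), (1 : ℤ))),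
  (([((0 : ℤ), (1 : ℤ)), ((1 : ℤ), (1 : ℤ)), ((2 : ℤ), (0 : ℤ)), ((2 : ℤ), (1 : ℤ)), ((3 : ℤ), (0 : ℤ))] : List (ℤ × ℤ)).toFinset, ([((0 : ℤ), (1 : ℤ)), ((1 : ℤ), (0 : ℤ)), ((1 : ℤ), (1 : ℤ)), ((2 : ℤ), (0 : ℤ))] : List (ℤ × ℤ)).toFinset, ((-1 : ℤ), (1 : ℤ))),
  (([((0 : ℤ), (1 : ℤ)), ((1 : ℤ), (1 : ℤ)), ((2 : ℤ), (0 : ℤ)), ((2 : ℤ), (1 : ℤ)), ((3 : ℤ), (1 : ℤ))] : List (ℤ × ℤ)).toFinset, ([((0 : ℤ), (1 : ℤ)), ((1 : ℤ), (0 : ℤ)), ((1 : ℤ), (1 : ℤ)), ((2 : ℤ), (1 : ℤ))] : List (ℤ × ℤ)).toFinset, ((-1 : ℤ), (1 : ℤ))),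
  (([((0 : ℤ), (1 : ℤ)), ((1 : ℤ), (1 : ℤ)), ((2 : ℤ), (1 : ℤ)), ((3 : ℤ), (0 : ℤ)), ((3 : ℤ), (1 : ℤ))] : List (ℤ × ℤ)).toFinset, ([((0 : ℤ), (1 : ℤ)), ((1 : ℤ), (1 : ℤ)), ((2 : ℤ), (0 : ℤ)), ((2 : ℤ), (1 : ℤ))] : List (ℤ × ℤ)).toFinset, ((-1 : ℤ), (1 : ℤ))),
  (([((0 : ℤ), (2 : ℤ)), ((0 : ℤ), (3 : ℤ)), ((1 : ℤ), (0 : ℤ)), ((1 : ℤ), (1 : ℤ)), ((1 : ℤ), (2 : ℤ))] : List (ℤ × ℤ)).toFinset, ([((0 : ℤ), (2 : ℤ)), ((1 : ℤ), (0 : ℤ)), ((1 : ℤ), (1 : ℤ)), ((1 : ℤ), (2 : ℤ))] : List (ℤ × ℤ)).toFinset, ((0 : ℤ), (3 : ℤ))),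
  (([((0 : ℤ), (2 : ℤ)), ((1 : ℤ), (0 : ℤ)), ((1 : ℤ), (1 : ℤ)), ((1 : ℤ), (2 : ℤ)), ((1 : ℤ), (3 : ℤ))] : List (ℤ × ℤ)).toFinset, ([((0 : ℤ), (0 : ℤ)), ((0 : ℤ), (1 : ℤ)), ((0 : ℤ), (2 : ℤ)), ((0 : ℤ), (3 : ℤ))] : List (ℤ × ℤ)).toFinset, ((-1 : ℤ), (2 : ℤ))),
  (([((0 : ℤ), (2 : ℤ)), ((1 : ℤ), (0 : ℤ)), ((1 : ℤ), (1 : ℤ)), ((1 : ℤ), (2 : ℤ)), ((2 : ℤ), (0 : ℤ))] : List (ℤ × ℤ)).toFinset, ([((0 : ℤ), (0 : ℤ)), ((0 : ℤ), (1 : ℤ)), ((0 : ℤ), (2 : ℤ)), ((1 : ℤ), (0 : ℤ))] : List (ℤ × ℤ)).toFinset, ((-1 : ℤ), (2 : ℤ))),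
  (([((0 : ℤ), (2 : ℤ)), ((1 : ℤ), (0 : ℤ)), ((1 : ℤ), (1 : ℤ)), ((1 : ℤ), (2 : ℤ)), ((2 : ℤ), (1 : ℤ))] : List (ℤ × ℤ)).toFinset, ([((0 : ℤ), (0 : ℤ)), ((0 : ℤ), (1 : ℤ)), ((0 : ℤ), (2 : ℤ)), ((1 : ℤ), (1 : ℤ))] : List (ℤ × ℤ)).toFinset, ((-1 : ℤ), (2 : ℤ))),
  (([((0 : ℤ), (2 : ℤ)), ((1 : ℤ), (0 : ℤ)), ((1 : ℤ), (1 : ℤ)), ((1 : ℤ), (2 : ℤ)), ((2 : ℤ), (2 : ℤ))] : List (ℤ × ℤ)).toFinset, ([((0 : ℤ), (0 : ℤ)), ((0 : ℤ), (1 : ℤ)), ((0 : ℤ), (2 : ℤ)), ((1 : ℤ), (2 : ℤ))] : List (ℤ × ℤ)).toFinset, ((-1 : ℤ), (2 : ℤ))),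
  (([((0 : ℤ), (2 : ℤ)), ((1 : ℤ), (1 : ℤ)), ((1 : ℤ), (2 : ℤ)), ((2 : ℤ), (0 : ℤ)), ((2 : ℤ), (1 : ℤ))] : List (ℤ × ℤ)).toFinset, ([((0 : ℤ), (1 : ℤ)), ((0 : ℤ), (2 : ℤ)), ((1 : ℤ), (0 : ℤ)), ((1 : ℤ), (1 : ℤ))] : List (ℤ × ℤ)).toFinset, ((-1 : ℤ), (2 : ℤ))),
  (([((0 : ℤ), (2 : ℤ)), ((1 : ℤ), (2 : ℤ)), ((2 : ℤ), (0 : ℤ)), ((2 : ℤ), (1 : ℤ)), ((2 : ℤ), (2 : ℤ))] : List (ℤ × ℤ)).toFinset, ([((0 : ℤ), (2 : ℤ)), ((1 : ℤ), (0 : ℤ)), ((1 : ℤ), (1 : ℤ)), ((1 : ℤ), (2 : ℤ))] : List (ℤ × ℤ)).toFinset, ((-1 : ℤ), (2 : ℤ))),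
  (([((0 : ℤ), (3 : ℤ)), ((1 : ℤ), (0 : ℤ)), ((1 : ℤ), (1 : ℤ)), ((1 : ℤ), (2 : ℤ)), ((1 : ℤ), (3 : ℤ))] : List (ℤ × ℤ)).toFinset, ([((0 : ℤ), (0 : ℤ)), ((0 : ℤ), (1 : ℤ)), ((0 : ℤ), (2 : ℤ)), ((0 : ℤ), (3 : ℤ))] : List (ℤ × ℤ)).toFinset, ((-1 : ℤ), (3 : ℤ)))]

def rotF (k : ℕ) (Q : Finset (ℤ × ℤ)) : Finset (ℤ × ℤ) := Q.image (rotQ^[k])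

def idx (X : Finset (ℤ × ℤ)) : ℕ := L5c.findIdx (fun cl => decide (X ∈ cl))

set_option maxRecDepth 1000000

lemma F1 : ∀ i < 18, ∀ Q ∈ L5c.getD i [], idx Q = i := by decide
lemma F2 : ∀ cl ∈ L5c, ∀ i < cl.length,
    nrm (rotF 1 (cl.getD i ∅)) = cl.getD ((i+1) % cl.length) ∅ := by decide
lemma Fne : ∀ cl ∈ L5c, cl ≠ [] := by decide
lemma FL : L5c.length = 18 := by decide
lemma D3 : ∀ Q ∈ L5, nrm Q = Q := by decide

lemma WC2 : ∀ w ∈ W2, w.2.1 ∈ L1 ∧ w.2.2 ∈ nbrs w.2.1 \ w.2.1 ∧ w.1 = nrm (insert w.2.2 w.2.1) := by decide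
lemma WC3 : ∀ w ∈ W3, w.2.1 ∈ L2 ∧ w.2.2 ∈ nbrs w.2.1 \ w.2.1 ∧ w.1 = nrm (insert w.2.2 w.2.1) := by decide
lemma WC4 : ∀ w ∈ W4, w.2.1 ∈ L3 ∧ w.2.2 ∈ nbrs w.2.1 \ w.2.1 ∧ w.1 = nrm (insert w.2.2 w.2.1) := by decide
lemma WC5 : ∀ w ∈ W5, w.2.1 ∈ L4 ∧ w.2.2 ∈ nbrs w.2.1 \ w.2.1 ∧ w.1 = nrm (insert w.2.2 w.2.1) := by decide
lemma CV2 : ∀ Q ∈ L2, ∃ w ∈ W2, w.1 = Q := by decide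
lemma CV3 : ∀ Q ∈ L3, ∃ w ∈ W3, w.1 = Q := by decide
lemma CV4 : ∀ Q ∈ L4, ∃ w ∈ W4, w.1 = Q := by decide
lemma CV5 : ∀ Q ∈ L5, ∃ w ∈ W5, w.1 = Q := by decide
lemma D1_1 : ∀ Q ∈ L1, ∀ d ∈ nbrs Q \ Q, nrm (insert d Q) ∈ L2 := by decide
lemma D1_2 : ∀ Q ∈ L2, ∀ d ∈ nbrs Q \ Q, nrm (insert d Q) ∈ L3 := by decide
lemma D1_3 : ∀ Q ∈ L3, ∀ d ∈ nbrs Q \ Q, nrm (insert d Q) ∈ L4 := by decide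
lemma D1_4 : ∀ Q ∈ L4, ∀ d ∈ nbrs Q \ Q, nrm (insert d Q) ∈ L5 := by decide

-- ===== rotation algebra =====
lemma rot_add (a b : ℤ × ℤ) : rotQ (a + b) = rotQ a + rotQ b := by
  simp only [rotQ, Prod.ext_iff, Prod.fst_add, Prod.snd_add]
  constructor <;> simp <;> ring

lemma rotk_add (k : ℕ) (a b : ℤ × ℤ) : rotQ^[k] (a + b) = rotQ^[k] a + rotQ^[k] b := by
  induction k generalizing a b with
  | zero => simp
  | succ k ih =>
    rw [Function.iterate_succ_apply', Function.iterate_succ_apply',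
      Function.iterate_succ_apply', ih, rot_add]

lemma rot4 : rotQ^[4] = id := by
  funext a
  show rotQ (rotQ (rotQ (rotQ a))) = a
  simp [rotQ]

lemma rotk_mod (k : ℕ) (a : ℤ × ℤ) : rotQ^[k] a = rotQ^[k % 4] a := by
  conv_lhs => rw [← Nat.mod_add_div k 4]
  rw [Function.iterate_add_apply, Function.iterate_mul, rot4]
  simp

lemma rot_iter_cancel (k : ℕ) (a : ℤ × ℤ) : rotQ^[(4 - k % 4) % 4] (rotQ^[k] a) = a := by
  rw [← Function.iterate_add_apply]
  rw [rotk_mod]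
  have h : ((4 - k % 4) % 4 + k) % 4 = 0 := by omega
  rw [h]
  rfl

-- ===== rel' =====
def rel' (X Y : Finset (ℤ × ℤ)) : Prop :=
  ∃ (k : ℕ) (t : ℤ × ℤ), Y = X.image (fun c => rotQ^[k] c + t)

lemma rel'_refl (X : Finset (ℤ × ℤ)) : rel' X X :=
  ⟨0, 0, by simp⟩

lemma rel'_trans {X Y Z : Finset (ℤ × ℤ)} (h1 : rel' X Y) (h2 : rel' Y Z) : rel' X Z := by
  obtain ⟨k, t, rfl⟩ := h1
  obtain ⟨k', t', rfl⟩ := h2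
  refine ⟨k' + k, rotQ^[k'] t + t', ?_⟩
  rw [Finset.image_image]
  congr 1
  funext c
  simp only [Function.comp_apply]
  rw [rotk_add, Function.iterate_add_apply, add_assoc]

lemma rel'_symm {X Y : Finset (ℤ × ℤ)} (h : rel' X Y) : rel' Y X := by
  obtain ⟨k, t, rfl⟩ := h
  set k' := (4 - k % 4) % 4 with hk'
  refine ⟨k', -(rotQ^[k'] t), ?_⟩
  rw [Finset.image_image]
  have : ((fun c => rotQ^[k'] c + -(rotQ^[k'] t)) ∘ fun c => rotQ^[k] c + t) = id := by
    funext c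
    simp only [Function.comp_apply, id_eq]
    rw [rotk_add, add_assoc, add_neg_cancel, add_zero, rot_iter_cancel]
  rw [this, Finset.image_id]

lemma rel'_transl (X : Finset (ℤ × ℤ)) (t : ℤ × ℤ) : rel' X (X.image (· + t)) :=
  ⟨0, t, by simp⟩

lemma nrm_eq_image_neg (X : Finset (ℤ × ℤ)) : nrm X = X.image (· + (-mcorn X)) := by
  unfold nrm
  have h : (fun c : ℤ × ℤ => c - mcorn X) = (· + (-mcorn X)) :=
    funext fun c => sub_eq_add_neg c _
  rw [h]

lemma rel'_nrm (X : Finset (ℤ × ℤ)) : rel' X (nrm X) := by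
  rw [nrm_eq_image_neg]; exact rel'_transl X _

lemma rotF_image_add (X : Finset (ℤ × ℤ)) (s : ℤ × ℤ) (k : ℕ) :
    rotF k (X.image (· + s)) = (rotF k X).image (· + rotQ^[k] s) := by
  unfold rotF
  rw [Finset.image_image, Finset.image_image]
  congr 1
  funext c
  simp only [Function.comp_apply]
  rw [rotk_add]

lemma nrm_rotF_nrm (Y : Finset (ℤ × ℤ)) (hY : Y.Nonempty) :
    nrm (rotF 1 (nrm Y)) = nrm (rotF 1 Y) := by
  rw [nrm_eq_image_neg Y, rotF_image_add]
  exact norm_image_add _ (hY.image _) _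

-- ===== chain lemmas on L5 classes =====
lemma mem_L5_of_cl {cl : List (Finset (ℤ × ℤ))} {Q : Finset (ℤ × ℤ)}
    (hcl : cl ∈ L5c) (hQ : Q ∈ cl) : Q ∈ L5 :=
  List.mem_flatten.mpr ⟨cl, hcl, hQ⟩

-- connectivity and cardinality of all list members
lemma connCard1 : ∀ Q ∈ L1, Conn Q ∧ Q.card = 1 := by
  intro Q hQ
  have : Q = {((0:ℤ),(0:ℤ))} := by
    simp [L1] at hQ
    rw [hQ]
  rw [this]
  exact ⟨conn_singleton _, rfl⟩

lemma connStep {n : ℕ} (Ln : List (Finset (ℤ × ℤ)))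
    (W : List (Finset (ℤ × ℤ) × Finset (ℤ × ℤ) × (ℤ × ℤ)))
    (Ln1 : List (Finset (ℤ × ℤ)))
    (hWC : ∀ w ∈ W, w.2.1 ∈ Ln ∧ w.2.2 ∈ nbrs w.2.1 \ w.2.1 ∧ w.1 = nrm (insert w.2.2 w.2.1))
    (hCV : ∀ Q ∈ Ln1, ∃ w ∈ W, w.1 = Q)
    (hC : ∀ Q ∈ Ln, Conn Q ∧ Q.card = n) :
    ∀ Q' ∈ Ln1, Conn Q' ∧ Q'.card = n + 1 := by
  have hD2 : ∀ Q' ∈ Ln1, ∃ Q ∈ Ln, ∃ d ∈ nbrs Q \ Q, Q' = nrm (insert d Q) := by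
    intro Q' hQ'
    obtain ⟨w, hw, hw1⟩ := hCV Q' hQ'
    obtain ⟨h1, h2, h3⟩ := hWC w hw
    exact ⟨w.2.1, h1, w.2.2, h2, hw1 ▸ h3⟩
  exact connL Ln Ln1 hD2 hC

lemma connCard2 : ∀ Q ∈ L2, Conn Q ∧ Q.card = 2 := connStep L1 W2 L2 WC2 CV2 connCard1
lemma connCard3 : ∀ Q ∈ L3, Conn Q ∧ Q.card = 3 := connStep L2 W3 L3 WC3 CV3 connCard2
lemma connCard4 : ∀ Q ∈ L4, Conn Q ∧ Q.card = 4 := connStep L3 W4 L4 WC4 CV4 connCard3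
lemma connCard5 : ∀ Q ∈ L5, Conn Q ∧ Q.card = 5 := connStep L4 W5 L5 WC5 CV5 connCard4

lemma L5_nonempty {Q : Finset (ℤ × ℤ)} (hQ : Q ∈ L5) : Q.Nonempty :=
  Finset.card_pos.mp (by rw [(connCard5 Q hQ).2]; norm_num)

-- classification
lemma classification : ∀ P : Finset (ℤ × ℤ), P.card = 5 → Conn P →
    ∃ Q ∈ L5, ∃ t, P = Q.image (· + t) := by
  have c1 : ∀ P : Finset (ℤ × ℤ), P.card = 1 → Conn P → ∃ Q ∈ L1, ∃ t, P = Q.image (· + t) := by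
    intro P h hc
    obtain ⟨Q, hQ, t, ht⟩ := claim1 P h hc
    refine ⟨Q, ?_, t, ht⟩
    simp only [L1, List.mem_cons, List.not_mem_nil, or_false] at hQ ⊢
    rw [hQ]
    rfl
  have c2 := stepL (n := 1) (by norm_num) L1 L2 D1_1 c1
  have c3 := stepL (n := 2) (by norm_num) L2 L3 D1_2 c2
  have c4 := stepL (n := 3) (by norm_num) L3 L4 D1_3 c3
  exact stepL (n := 4) (by norm_num) L4 L5 D1_4 c4

-- ===== class machinery =====
lemma headD_mem {α : Type*} {l : List α} (h : l ≠ []) (d : α) : l.headD d ∈ l := by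
  cases l with
  | nil => exact absurd rfl h
  | cons a t => exact List.mem_cons_self

lemma getD_mem {α : Type*} {l : List α} {i : ℕ} (h : i < l.length) (d : α) : l.getD i d ∈ l := by
  rw [List.getD_eq_getElem l d h]
  exact List.getElem_mem h

lemma rel'_rotF (k : ℕ) (X : Finset (ℤ × ℤ)) : rel' X (rotF k X) :=
  ⟨k, 0, by simp [rotF]⟩

lemma rotF_succ (k : ℕ) (Q : Finset (ℤ × ℤ)) : rotF (k+1) Q = rotF 1 (rotF k Q) := by
  unfold rotF
  rw [Finset.image_image]
  congr 1
  funext c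
  simp only [Function.comp_apply, Function.iterate_one]
  rw [Function.iterate_succ_apply' rotQ k c]

lemma chain_rel {cl : List (Finset (ℤ × ℤ))} (hcl : cl ∈ L5c) :
    ∀ i, i < cl.length → rel' (cl.getD 0 ∅) (cl.getD i ∅) := by
  intro i
  induction i with
  | zero => intro _; exact rel'_refl _
  | succ i ih =>
    intro h
    have hi : i < cl.length := Nat.lt_of_succ_lt h
    have hF := F2 cl hcl i hi
    rw [Nat.mod_eq_of_lt h] at hF
    refine rel'_trans (ih hi) ?_
    rw [← hF]
    exact rel'_trans (rel'_rotF 1 _) (rel'_nrm _)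

lemma rel_of_same_cl {cl : List (Finset (ℤ × ℤ))} (hcl : cl ∈ L5c)
    {Q Q' : Finset (ℤ × ℤ)} (hQ : Q ∈ cl) (hQ' : Q' ∈ cl) : rel' Q Q' := by
  obtain ⟨i, hi, hQi⟩ := List.mem_iff_getElem.mp hQ
  obtain ⟨j, hj, hQj⟩ := List.mem_iff_getElem.mp hQ'
  have h1 : cl.getD i ∅ = Q := by rw [List.getD_eq_getElem cl ∅ hi]; exact hQi
  have h2 : cl.getD j ∅ = Q' := by rw [List.getD_eq_getElem cl ∅ hj]; exact hQj
  exact rel'_trans (rel'_symm (h1 ▸ chain_rel hcl i hi)) (h2 ▸ chain_rel hcl j hj)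

lemma stay {cl : List (Finset (ℤ × ℤ))} (hcl : cl ∈ L5c) :
    ∀ k, ∀ Q ∈ cl, nrm (rotF k Q) ∈ cl := by
  intro k
  induction k with
  | zero =>
    intro Q hQ
    have : rotF 0 Q = Q := by unfold rotF; simp
    rw [this, D3 Q (mem_L5_of_cl hcl hQ)]
    exact hQ
  | succ k ih =>
    intro Q hQ
    have hne : (rotF k Q).Nonempty := (L5_nonempty (mem_L5_of_cl hcl hQ)).image _
    rw [rotF_succ, ← nrm_rotF_nrm _ hne]
    have hX := ih Q hQ
    obtain ⟨i, hi, hXi⟩ := List.mem_iff_getElem.mp hX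
    have h1 : cl.getD i ∅ = nrm (rotF k Q) := by rw [List.getD_eq_getElem cl ∅ hi]; exact hXi
    rw [← h1, F2 cl hcl i hi]
    exact getD_mem (Nat.mod_lt _ (by omega)) ∅

-- ===== pento facts =====
lemma pento_spec (P : Pento) : ∃ Q ∈ L5, ∃ t, P.1 = Q.image (· + t) :=
  classification P.1 P.2.1 P.2.2

lemma pento_nrm {P : Pento} {Q : Finset (ℤ × ℤ)} {t : ℤ × ℤ}
    (hQ : Q ∈ L5) (hP : P.1 = Q.image (· + t)) : nrm P.1 = Q := by
  rw [hP, norm_image_add Q (L5_nonempty hQ) t, D3 Q hQ]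

lemma cl_of_mem_L5 {Q : Finset (ℤ × ℤ)} (hQ : Q ∈ L5) :
    ∃ i, ∃ _ : i < 18, Q ∈ L5c.getD i [] := by
  obtain ⟨cl, hcl, hQcl⟩ := List.mem_flatten.mp hQ
  obtain ⟨i, hi, hcli⟩ := List.mem_iff_getElem.mp hcl
  refine ⟨i, by rw [FL] at hi; exact hi, ?_⟩
  rw [List.getD_eq_getElem L5c [] hi, hcli]
  exact hQcl

lemma L5c_getD_mem {i : ℕ} (hi : i < 18) : L5c.getD i [] ∈ L5c :=
  getD_mem (by rw [FL]; exact hi) []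

lemma idx_lt {P : Pento} : idx (nrm P.1) < 18 ∧ nrm P.1 ∈ L5 := by
  obtain ⟨Q, hQ, t, hP⟩ := pento_spec P
  rw [pento_nrm hQ hP]
  obtain ⟨i, hi, hQi⟩ := cl_of_mem_L5 hQ
  rw [F1 i hi Q hQi]
  exact ⟨hi, hQ⟩

lemma sound_idx {P P2 : Pento} (h : pentoRel P P2) : idx (nrm P.1) = idx (nrm P2.1) := by
  obtain ⟨Q, hQ, t, hP⟩ := pento_spec P
  obtain ⟨i, hi, hQi⟩ := cl_of_mem_L5 hQ
  have hcl : L5c.getD i [] ∈ L5c := L5c_getD_mem hi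
  obtain ⟨k, t', hP2⟩ := h
  have himg : P.1.image (fun c => rotQ^[k] c + t') = (rotF k P.1).image (· + t') := by
    unfold rotF
    rw [Finset.image_image]
    rfl
  have hne : (rotF k P.1).Nonempty := by
    refine Finset.Nonempty.image ?_ _
    exact Finset.card_pos.mp (by rw [P.2.1]; norm_num)
  have hnrm2 : nrm P2.1 = nrm (rotF k Q) := by
    rw [hP2, himg, norm_image_add _ hne t', hP, rotF_image_add]
    exact norm_image_add (rotF k Q) ((L5_nonempty hQ).image _) _
  have hmem : nrm P2.1 ∈ L5c.getD i [] := hnrm2 ▸ stay hcl k Q hQi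
  rw [pento_nrm hQ hP, F1 i hi Q hQi, F1 i hi _ hmem]

lemma inj_rel {P P2 : Pento} (h : idx (nrm P.1) = idx (nrm P2.1)) : pentoRel P P2 := by
  obtain ⟨Q, hQ, t, hP⟩ := pento_spec P
  obtain ⟨Q', hQ', t', hP'⟩ := pento_spec P2
  obtain ⟨i, hi, hQi⟩ := cl_of_mem_L5 hQ
  obtain ⟨j, hj, hQj⟩ := cl_of_mem_L5 hQ'
  rw [pento_nrm hQ hP, pento_nrm hQ' hP', F1 i hi Q hQi, F1 j hj Q' hQj] at h
  subst h
  have hrel : rel' Q Q' := rel_of_same_cl (L5c_getD_mem hi) hQi hQj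
  have h1 : rel' P.1 Q := rel'_symm (hP ▸ rel'_transl Q t)
  have h2 : rel' Q' P2.1 := hP' ▸ rel'_transl Q' t'
  exact rel'_trans (rel'_trans h1 hrel) h2

def rep (i : Fin 18) : Pento := by
  refine ⟨(L5c.getD i.1 []).headD ∅, ?_⟩
  have hcl : L5c.getD i.1 [] ∈ L5c := L5c_getD_mem i.2
  have hmem : (L5c.getD i.1 []).headD ∅ ∈ L5c.getD i.1 [] := headD_mem (Fne _ hcl) ∅
  have h5 : (L5c.getD i.1 []).headD ∅ ∈ L5 := mem_L5_of_cl hcl hmem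
  exact ⟨(connCard5 _ h5).2, (connCard5 _ h5).1⟩

lemma rep_idx (i : Fin 18) : idx (nrm (rep i).1) = i.1 := by
  have hcl : L5c.getD i.1 [] ∈ L5c := L5c_getD_mem i.2
  have hmem : (rep i).1 ∈ L5c.getD i.1 [] := headD_mem (Fne _ hcl) ∅
  have h5 : (rep i).1 ∈ L5 := mem_L5_of_cl hcl hmem
  rw [D3 _ h5]
  exact F1 i.1 i.2 _ hmem

noncomputable def Fmap : Quot pentoRel → Fin 18 :=
  Quot.lift (fun P => (⟨idx (nrm P.1) % 18, Nat.mod_lt _ (by norm_num)⟩ : Fin 18))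
    (fun P P2 h => by simp only [sound_idx h])

/-- There are exactly 18 one-sided pentominoes. -/
theorem one_sided_pentominoes_card : Nat.card (Quot pentoRel) = 18 := by
  have hbij : Function.Bijective Fmap := by
    constructor
    · intro x y
      induction x using Quot.ind with | _ P =>
      induction y using Quot.ind with | _ P2 =>
      intro h
      have h' : idx (nrm P.1) % 18 = idx (nrm P2.1) % 18 := congrArg Fin.val h
      rw [Nat.mod_eq_of_lt idx_lt.1, Nat.mod_eq_of_lt idx_lt.1] at h'
      exact Quot.sound (inj_rel h')
    · intro i
      refine ⟨Quot.mk _ (rep i), ?_⟩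
      show (⟨idx (nrm (rep i).1) % 18, _⟩ : Fin 18) = i
      apply Fin.ext
      show idx (nrm (rep i).1) % 18 = i.1
      rw [rep_idx i, Nat.mod_eq_of_lt i.2]
  rw [Nat.card_eq_of_bijective Fmap hbij]
  simp
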